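/- arXiv:1606.00608 — 5 statements merged into one kernel-verified Lean document; each statement's English description precedes it below -/
import Mathlib

section
/- Let λ_{a,1}, …, λ_{a,x_a} and λ_{b,1}, …, λ_{b,x_b} be nonzero complex numbers. If Σ_{k=1}^{x_a} λ_{a,k}^N = Σ_{k=1}^{x_b} λ_{b,k}^N for every integer N with 1 ≤ N ≤ max{x_a, x_b}, then x_a = x_b and the multisets {λ_{a,1}, …, λ_{a,x_a}} and {λ_{b,1}, …, λ_{b,x_b}} coincide. -/
open Finset Polynomial

noncomputable def Eval {m : ℕ} (f : Fin m → ℂ) (k : ℕ) : ℂ :=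
  (Multiset.map f Finset.univ.val).esymm k

lemma newton_eval {m : ℕ} (f : Fin m → ℂ) (k : ℕ) :
    (k : ℂ) * Eval f k =
      (-1) ^ (k + 1) *
        ∑ p ∈ (Finset.HasAntidiagonal.antidiagonal k).filter (fun p => p.1 < k),
          (-1) ^ p.1 * Eval f p.1 * ∑ i, f i ^ p.2 := by
  have h := congrArg (MvPolynomial.aeval f) (MvPolynomial.mul_esymm_eq_sum (Fin m) ℂ k)
  have hps : ∀ n : ℕ, MvPolynomial.aeval f (MvPolynomial.psum (Fin m) ℂ n) = ∑ i, f i ^ n := by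
    intro n
    simp [MvPolynomial.psum, map_sum]
  have he : ∀ n : ℕ, MvPolynomial.aeval f (MvPolynomial.esymm (Fin m) ℂ n) = Eval f n := by
    intro n
    rw [MvPolynomial.aeval_esymm_eq_multiset_esymm]
    rfl
  simp only [map_mul, map_sum, map_pow, map_neg, map_one, map_natCast, he, hps] at h
  exact h

lemma esymm_eq {m : ℕ} (f g : Fin m → ℂ)
    (hp : ∀ N : ℕ, 1 ≤ N → N ≤ m → ∑ i, f i ^ N = ∑ i, g i ^ N) :
    ∀ k, Eval f k = Eval g k := by
  intro k
  induction k using Nat.strong_induction_on with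
  | _ k ih =>
    rcases Nat.eq_zero_or_pos k with rfl | hk
    · simp [Eval, Multiset.esymm]
    rcases le_or_gt k m with hkm | hkm
    · have hf := newton_eval f k
      have hg := newton_eval g k
      have hsum : ∑ p ∈ (Finset.HasAntidiagonal.antidiagonal k).filter (fun p => p.1 < k),
            (-1) ^ p.1 * Eval f p.1 * ∑ i, f i ^ p.2 =
          ∑ p ∈ (Finset.HasAntidiagonal.antidiagonal k).filter (fun p => p.1 < k),
            (-1) ^ p.1 * Eval g p.1 * ∑ i, g i ^ p.2 := by
        refine Finset.sum_congr rfl fun p hp' => ?_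
        rw [Finset.mem_filter, Finset.HasAntidiagonal.mem_antidiagonal] at hp'
        have h1 : p.1 < k := hp'.2
        have h2 : 1 ≤ p.2 := by omega
        have h3 : p.2 ≤ m := by omega
        rw [ih p.1 h1, hp p.2 h2 h3]
      have : (k : ℂ) * Eval f k = (k : ℂ) * Eval g k := by rw [hf, hg, hsum]
      exact mul_left_cancel₀ (Nat.cast_ne_zero.mpr hk.ne') this
    · have hc : ∀ h : Fin m → ℂ, Eval h k = 0 := by
        intro h
        rw [Eval, Multiset.esymm, Multiset.powersetCard_eq_empty _ (by simpa using hkm)]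
        simp
      rw [hc f, hc g]

lemma multiset_eq_of_esymm {m : ℕ} (f g : Fin m → ℂ)
    (hE : ∀ k, Eval f k = Eval g k) :
    Multiset.map f Finset.univ.val = Multiset.map g Finset.univ.val := by
  have hcf : Multiset.card (Multiset.map f Finset.univ.val) = m := by simp
  have hcg : Multiset.card (Multiset.map g Finset.univ.val) = m := by simp
  have hpoly : ((Multiset.map f Finset.univ.val).map fun r => X - C r).prod =
      ((Multiset.map g Finset.univ.val).map fun r => X - C r).prod := by
    ext k
    rcases le_or_gt k m with hkm | hkm
    · rw [Multiset.prod_X_sub_C_coeff _ (by rw [hcf]; exact hkm),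
        Multiset.prod_X_sub_C_coeff _ (by rw [hcg]; exact hkm), hcf, hcg]
      have := hE (m - k)
      unfold Eval at this
      rw [this]
    · rw [Polynomial.coeff_eq_zero_of_natDegree_lt, Polynomial.coeff_eq_zero_of_natDegree_lt] <;>
        rw [Polynomial.natDegree_multiset_prod_X_sub_C_eq_card] <;> omega
  have := congrArg Polynomial.roots hpoly
  rwa [Polynomial.roots_multiset_prod_X_sub_C, Polynomial.roots_multiset_prod_X_sub_C] at this

lemma map_val_eq_sum {α β : Type*} (s : Finset α) (f : α → β) :
    Multiset.map f s.val = ∑ x ∈ s, ({f x} : Multiset β) := by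
  rw [show (fun x => ({f x} : Multiset β)) = (fun a => ({a} : Multiset β)) ∘ f from rfl]
  rw [Finset.sum, ← Multiset.map_map, Multiset.sum_map_singleton]

lemma map_univ_succAbove {α : Type*} {n : ℕ} (c : Fin (n + 1) → α) (j : Fin (n + 1)) :
    Multiset.map c Finset.univ.val =
      c j ::ₘ Multiset.map (fun i => c (j.succAbove i)) Finset.univ.val := by
  rw [Fin.univ_succAbove n j, Finset.cons_val, Multiset.map_cons, Finset.map_val,
    Multiset.map_map]
  rfl

lemma exists_perm_of_map_univ_eq {α : Type*} :
    ∀ {n : ℕ} (a b : Fin n → α),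
      Multiset.map a Finset.univ.val = Multiset.map b Finset.univ.val →
      ∃ σ : Equiv.Perm (Fin n), ∀ k, a k = b (σ k) := by
  intro n
  induction n with
  | zero => exact fun a b _ => ⟨Equiv.refl _, fun k => k.elim0⟩
  | succ n ih =>
    intro a b h
    have hmem : a 0 ∈ Multiset.map b Finset.univ.val := by
      rw [← h]
      exact Multiset.mem_map.mpr ⟨0, by simp⟩
    obtain ⟨j, -, hj⟩ := Multiset.mem_map.mp hmem
    rw [map_univ_succAbove a 0, map_univ_succAbove b j, hj, Fin.succAbove_zero] at h
    have h' := (Multiset.cons_inj_right _).mp h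
    obtain ⟨σ', hσ'⟩ := ih (fun i => a i.succ) (fun i => b (j.succAbove i)) h'
    refine ⟨(finSuccEquiv' (0 : Fin (n + 1))).trans
      (σ'.optionCongr.trans (finSuccEquiv' j).symm), fun k => ?_⟩
    refine Fin.cases ?_ (fun i => ?_) k
    · simp [finSuccEquiv'_at, finSuccEquiv'_symm_none, hj]
    · have : (finSuccEquiv' (0 : Fin (n + 1))) i.succ = some i := by
        simpa using finSuccEquiv'_succAbove (0 : Fin (n + 1)) i
      simp [this, finSuccEquiv'_symm_some, hσ' i]

lemma pad_sum {M : Type*} [AddCommMonoid M] {xa m : ℕ} (hxa : xa ≤ m) (F : ℕ → M) (c : M)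
    (h0 : ∀ i, xa ≤ i → F i = c) :
    ∑ i : Fin m, F i = (∑ k : Fin xa, F k) + (m - xa) • c := by
  rw [Fin.sum_univ_eq_sum_range, Fin.sum_univ_eq_sum_range,
    Finset.range_eq_Ico, ← Finset.sum_Ico_consecutive _ (Nat.zero_le xa) hxa,
    ← Finset.range_eq_Ico]
  congr 1
  rw [Finset.sum_congr rfl (fun i hi => h0 i (Finset.mem_Ico.mp hi).1), Finset.sum_const,
    Nat.card_Ico]

/-- Two finite families of nonzero complex numbers whose power sums agree for all
exponents `1 ≤ N ≤ max{x_a, x_b}` have the same size and coincide as multisets. -/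
theorem power_sums_determine_multiset
    {xa xb : ℕ} (a : Fin xa → ℂ) (b : Fin xb → ℂ)
    (ha : ∀ k, a k ≠ 0) (hb : ∀ k, b k ≠ 0)
    (h : ∀ N : ℕ, 1 ≤ N → N ≤ max xa xb →
      ∑ k, a k ^ N = ∑ k, b k ^ N) :
    xa = xb ∧ ∃ σ : Fin xa ≃ Fin xb, ∀ k, a k = b (σ k) := by
  set m := max xa xb with hm
  have hxa : xa ≤ m := le_max_left _ _
  have hxb : xb ≤ m := le_max_right _ _
  set f : Fin m → ℂ := fun i => if h : (i : ℕ) < xa then a ⟨i, h⟩ else 0 with hf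
  set g : Fin m → ℂ := fun i => if h : (i : ℕ) < xb then b ⟨i, h⟩ else 0 with hg
  have hpf : ∀ N : ℕ, 1 ≤ N → ∑ i, f i ^ N = ∑ k, a k ^ N := by
    intro N hN
    have hps := pad_sum hxa (fun n => (if h : n < xa then a ⟨n, h⟩ else 0) ^ N) 0
      (fun i hi => by
        show (if h : i < xa then a ⟨i, h⟩ else 0) ^ N = 0
        rw [dif_neg (by omega)]; exact zero_pow (by omega))
    rw [smul_zero, add_zero] at hps
    simp only [hf]
    rw [hps]
    refine Finset.sum_congr rfl fun k _ => ?_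
    show (if h : (k : ℕ) < xa then a ⟨(k : ℕ), h⟩ else 0) ^ N = a k ^ N
    rw [dif_pos k.isLt]
  have hpg : ∀ N : ℕ, 1 ≤ N → ∑ i, g i ^ N = ∑ k, b k ^ N := by
    intro N hN
    have hps := pad_sum hxb (fun n => (if h : n < xb then b ⟨n, h⟩ else 0) ^ N) 0
      (fun i hi => by
        show (if h : i < xb then b ⟨i, h⟩ else 0) ^ N = 0
        rw [dif_neg (by omega)]; exact zero_pow (by omega))
    rw [smul_zero, add_zero] at hps
    simp only [hg]
    rw [hps]
    refine Finset.sum_congr rfl fun k _ => ?_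
    show (if h : (k : ℕ) < xb then b ⟨(k : ℕ), h⟩ else 0) ^ N = b k ^ N
    rw [dif_pos k.isLt]
  have hdf : Multiset.map f Finset.univ.val =
      Multiset.map a Finset.univ.val + Multiset.replicate (m - xa) 0 := by
    rw [map_val_eq_sum, map_val_eq_sum]
    have hps := pad_sum hxa
      (fun n => ({(if h : n < xa then a ⟨n, h⟩ else 0 : ℂ)} : Multiset ℂ)) {0}
      (fun i hi => by
        show ({if h : i < xa then a ⟨i, h⟩ else 0} : Multiset ℂ) = {0}
        rw [dif_neg (by omega)])
    simp only [hf]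
    rw [hps]
    congr 1
    · refine Finset.sum_congr rfl fun k _ => ?_
      show ({if h : (k : ℕ) < xa then a ⟨(k : ℕ), h⟩ else 0} : Multiset ℂ) = {a k}
      rw [dif_pos k.isLt]
    · rw [Multiset.nsmul_singleton]
  have hdg : Multiset.map g Finset.univ.val =
      Multiset.map b Finset.univ.val + Multiset.replicate (m - xb) 0 := by
    rw [map_val_eq_sum, map_val_eq_sum]
    have hps := pad_sum hxb
      (fun n => ({(if h : n < xb then b ⟨n, h⟩ else 0 : ℂ)} : Multiset ℂ)) {0}
      (fun i hi => by
        show ({if h : i < xb then b ⟨i, h⟩ else 0} : Multiset ℂ) = {0}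
        rw [dif_neg (by omega)])
    simp only [hg]
    rw [hps]
    congr 1
    · refine Finset.sum_congr rfl fun k _ => ?_
      show ({if h : (k : ℕ) < xb then b ⟨(k : ℕ), h⟩ else 0} : Multiset ℂ) = {b k}
      rw [dif_pos k.isLt]
    · rw [Multiset.nsmul_singleton]
  have hps' : ∀ N : ℕ, 1 ≤ N → N ≤ m → ∑ i, f i ^ N = ∑ i, g i ^ N := by
    intro N h1 h2
    rw [hpf N h1, hpg N h1]
    exact h N h1 h2
  have hmm := multiset_eq_of_esymm f g (esymm_eq f g hps')
  rw [hdf, hdg] at hmm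
  have hca : Multiset.count 0 (Multiset.map a Finset.univ.val) = 0 :=
    Multiset.count_eq_zero.mpr (by
      intro hmem
      obtain ⟨k, -, hk⟩ := Multiset.mem_map.mp hmem
      exact ha k hk)
  have hcb : Multiset.count 0 (Multiset.map b Finset.univ.val) = 0 :=
    Multiset.count_eq_zero.mpr (by
      intro hmem
      obtain ⟨k, -, hk⟩ := Multiset.mem_map.mp hmem
      exact hb k hk)
  have hcount := congrArg (Multiset.count 0) hmm
  simp only [Multiset.count_add, hca, hcb, Multiset.count_replicate_self, zero_add] at hcount
  have hxab : xa = xb := by omega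
  subst hxab
  refine ⟨rfl, ?_⟩
  exact exists_perm_of_map_univ_eq a b (add_right_cancel hmm)
end

section
/- Let M be a mixed-state tensor with physical dimension d and bond dimension D that generates MPDO and is a renormalization fixed point. Then M has zero correlation length: the D×D matrix T = Σ_{i=1}^d M^{(i,i)} satisfies T² = T. -/
open scoped Matrix Kronecker ComplexOrder
open Filter

noncomputable section

/-- The coefficients of the matrix product vector (MPV) generated by the tensor `A`
on a ring of `N` sites: `⟨i₁,…,i_N | V^(N)(A)⟩ = tr (A^{i₁} ⋯ A^{i_N})`. -/
def mpvVec {ι : Type} {D : ℕ} (A : ι → Matrix (Fin D) (Fin D) ℂ) (N : ℕ) :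
    (Fin N → ι) → ℂ :=
  fun is => Matrix.trace (List.ofFn fun n => A (is n)).prod

/-- The (mixed) transfer matrix `Σ_i A^i ⊗ conj (B^i)` of two tensors. -/
def transferMat {ι : Type} [Fintype ι] {D D' : ℕ}
    (A : ι → Matrix (Fin D) (Fin D) ℂ) (B : ι → Matrix (Fin D') (Fin D') ℂ) :
    Matrix (Fin D × Fin D') (Fin D × Fin D') ℂ :=
  ∑ i, (A i) ⊗ₖ ((B i).map (starRingEnd ℂ))

/-- A tensor is *normal* if (i) there is no nontrivial orthogonal projector `P` with
`A^i P = P A^i P` for all `i`, and (ii) its transfer matrix has spectral radius 1,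
`1` as an algebraically simple eigenvalue, and no other eigenvalue of modulus one. -/
def IsNormalTensor {ι : Type} [Fintype ι] {D : ℕ}
    (A : ι → Matrix (Fin D) (Fin D) ℂ) : Prop :=
  (∀ P : Matrix (Fin D) (Fin D) ℂ, P.IsHermitian → P * P = P →
      (∀ i, A i * P = P * (A i * P)) → P = 0 ∨ P = 1) ∧
  (∀ μ : ℂ, (transferMat A A).charpoly.IsRoot μ →
      ‖μ‖ ≤ 1 ∧ (‖μ‖ = 1 → μ = 1)) ∧
  Polynomial.rootMultiplicity 1 (transferMat A A).charpoly = 1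

/-- A tensor is in *canonical form* if it is (up to a relabeling of the bond basis)
block diagonal, `A^i = ⊕_k μ_k A_k^i`, with each `A_k` a normal tensor, `|μ_k| ≤ 1`
and at least one `μ_k` of modulus one. -/
def InCanonicalForm {ι : Type} [Fintype ι] {D : ℕ}
    (A : ι → Matrix (Fin D) (Fin D) ℂ) : Prop :=
  ∃ (r : ℕ) (Dk : Fin r → ℕ) (μ : Fin r → ℂ)
    (Ak : (k : Fin r) → ι → Matrix (Fin (Dk k)) (Fin (Dk k)) ℂ)
    (e : Fin D ≃ ((k : Fin r) × Fin (Dk k))),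
    (∀ k, IsNormalTensor (Ak k)) ∧ (∀ k, ‖μ k‖ ≤ 1) ∧
    (∃ k, ‖μ k‖ = 1) ∧
    ∀ i, A i = Matrix.reindex e.symm e.symm (Matrix.blockDiagonal' fun k => μ k • Ak k i)

/-- `B = (B_1, …, B_g)` is a *basis of normal tensors* (BNT) of `A`: each `B_j` is normal,
every `V^(N)(A)` is a linear combination of the `V^(N)(B_j)`, and for all sufficiently
large `N` the vectors `V^(N)(B_j)` are linearly independent. -/
def IsBNTof {ι : Type} [Fintype ι] {D : ℕ} (A : ι → Matrix (Fin D) (Fin D) ℂ)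
    {g : ℕ} {Dj : Fin g → ℕ}
    (B : (j : Fin g) → ι → Matrix (Fin (Dj j)) (Fin (Dj j)) ℂ) : Prop :=
  (∀ j, IsNormalTensor (B j)) ∧
  (∀ N : ℕ, mpvVec A N ∈ Submodule.span ℂ (Set.range fun j => mpvVec (B j) N)) ∧
  (∃ N₀ : ℕ, ∀ N > N₀, LinearIndependent ℂ fun j => mpvVec (B j) N)

/-- `B` equals `A` up to a phase and a similarity (gauge) transformation:
`B^i = e^{iφ} X A^i X⁻¹` for all `i`, with `X` invertible. -/
def SimilarUpToPhase {ι : Type} {D₁ D₂ : ℕ}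
    (B : ι → Matrix (Fin D₁) (Fin D₁) ℂ) (A : ι → Matrix (Fin D₂) (Fin D₂) ℂ) : Prop :=
  ∃ (φ : ℝ) (X : Matrix (Fin D₁) (Fin D₂) ℂ) (Y : Matrix (Fin D₂) (Fin D₁) ℂ),
    X * Y = 1 ∧ Y * X = 1 ∧
    ∀ i, B i = Complex.exp ((φ : ℂ) * Complex.I) • (X * A i * Y)

/-- The matrix product density operator `ρ^(N)(M)` generated by a mixed-state tensor:
`⟨i₁,…,i_N| ρ^(N)(M) |j₁,…,j_N⟩ = tr (M^{(i₁,j₁)} ⋯ M^{(i_N,j_N)})`. -/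
def mpdo {d D : ℕ} (M : Fin d → Fin d → Matrix (Fin D) (Fin D) ℂ) (N : ℕ) :
    Matrix (Fin N → Fin d) (Fin N → Fin d) ℂ :=
  fun is js => Matrix.trace (List.ofFn fun n => M (is n) (js n)).prod

/-- `M` generates MPDO: all the operators `ρ^(N)(M)` are positive semidefinite. -/
def GeneratesMPDO {d D : ℕ} (M : Fin d → Fin d → Matrix (Fin D) (Fin D) ℂ) : Prop :=
  ∀ N : ℕ, 1 ≤ N → (mpdo M N).PosSemidef

/-- The horizontal MPV tensor associated to a mixed-state tensor: the physical index is
the pair `(i,j)`. -/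
def horiz {d D : ℕ} (M : Fin d → Fin d → Matrix (Fin D) (Fin D) ℂ) :
    Fin d × Fin d → Matrix (Fin D) (Fin D) ℂ :=
  fun ij => M ij.1 ij.2

/-- The vertical matrices of a mixed-state tensor: `(N_{(α,β)})_{i,j} = (M^{(i,j)})_{α,β}`.
Viewed as a tensor with physical index `(α,β)` and bond dimension `d`, this is the
vertical direction tensor of `M`. -/
def vert {d D : ℕ} (M : Fin d → Fin d → Matrix (Fin D) (Fin D) ℂ) :
    Fin D × Fin D → Matrix (Fin d) (Fin d) ℂ :=
  fun αβ i j => M i j αβ.1 αβ.2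

/-- A trace-preserving completely positive map between matrix algebras, in Kraus form. -/
def IsTPCPM {m n : Type} [Fintype m] [Fintype n] [DecidableEq m]
    (S : Matrix m m ℂ → Matrix n n ℂ) : Prop :=
  ∃ (κ : ℕ) (B : Fin κ → Matrix n m ℂ),
    (∑ k, (B k)ᴴ * B k = 1) ∧ ∀ X, S X = ∑ k, B k * X * (B k)ᴴ

/-- The one-site map `M₁(X)_{i,j} = tr(M^{(i,j)} X)`. -/
def oneSite {d D : ℕ} (M : Fin d → Fin d → Matrix (Fin D) (Fin D) ℂ)
    (X : Matrix (Fin D) (Fin D) ℂ) : Matrix (Fin d) (Fin d) ℂ :=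
  fun i j => Matrix.trace (M i j * X)

/-- The two-site map `M₂(X)_{(i₁,i₂),(j₁,j₂)} = tr(M^{(i₁,j₁)} M^{(i₂,j₂)} X)`. -/
def twoSite {d D : ℕ} (M : Fin d → Fin d → Matrix (Fin D) (Fin D) ℂ)
    (X : Matrix (Fin D) (Fin D) ℂ) : Matrix (Fin d × Fin d) (Fin d × Fin d) ℂ :=
  fun ii jj => Matrix.trace (M ii.1 jj.1 * M ii.2 jj.2 * X)

/-- *Renormalization fixed point* for mixed-state tensors: there exist trace-preserving
completely positive maps `S` and `T` with `S[M₂(X)] = M₁(X)` and `T[M₁(X)] = M₂(X)` for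
all `X`. -/
def IsMPDORFP {d D : ℕ} (M : Fin d → Fin d → Matrix (Fin D) (Fin D) ℂ) : Prop :=
  ∃ (S : Matrix (Fin d × Fin d) (Fin d × Fin d) ℂ → Matrix (Fin d) (Fin d) ℂ)
    (T : Matrix (Fin d) (Fin d) ℂ → Matrix (Fin d × Fin d) (Fin d × Fin d) ℂ),
    IsTPCPM S ∧ IsTPCPM T ∧
    ∀ X : Matrix (Fin D) (Fin D) ℂ,
      S (twoSite M X) = oneSite M X ∧ T (oneSite M X) = twoSite M X

lemma trace_mul_stdBasis {n : ℕ} (A : Matrix (Fin n) (Fin n) ℂ) (i j : Fin n) :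
    Matrix.trace (A * Matrix.single j i 1) = A i j := by
  simp [Matrix.trace, Matrix.diag, Matrix.mul_apply, Matrix.single, ite_and,
    mul_ite, Finset.sum_ite_eq, Finset.sum_ite_eq']

/-- A mixed-state tensor generating MPDO which is a renormalization fixed point has zero
correlation length: the matrix `T = Σ_i M^{(i,i)}` is idempotent. -/
theorem MPDO_RFP_implies_zero_correlation_length
    {d D : ℕ} (M : Fin d → Fin d → Matrix (Fin D) (Fin D) ℂ)
    (hMPDO : GeneratesMPDO M)
    (hRFP : IsMPDORFP M) :
    (∑ i, M i i) * (∑ i, M i i) = ∑ i, M i i := by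
  obtain ⟨S, T, ⟨κ, B, hB, hS⟩, -, hST⟩ := hRFP
  have key : ∀ X : Matrix (Fin D) (Fin D) ℂ,
      Matrix.trace ((∑ i, M i i) * (∑ i, M i i) * X)
        = Matrix.trace ((∑ i, M i i) * X) := by
    intro X
    -- trace preservation of S
    have htp : Matrix.trace (S (twoSite M X)) = Matrix.trace (twoSite M X) := by
      rw [hS, Matrix.trace_sum]
      have : ∀ k, Matrix.trace (B k * twoSite M X * (B k)ᴴ)
          = Matrix.trace ((B k)ᴴ * B k * twoSite M X) := by
        intro k
        rw [Matrix.trace_mul_cycle, Matrix.mul_assoc]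
      simp_rw [this, ← Matrix.trace_sum, ← Matrix.sum_mul, hB, Matrix.one_mul]
    have h1 : Matrix.trace (oneSite M X) = Matrix.trace ((∑ i, M i i) * X) := by
      simp [oneSite, Matrix.trace, Matrix.diag, Matrix.sum_mul, Matrix.sum_apply]
      exact Finset.sum_comm ..
    have h2 : Matrix.trace (twoSite M X)
        = Matrix.trace ((∑ i, M i i) * (∑ i, M i i) * X) := by
      simp only [Matrix.sum_mul, Matrix.mul_sum, Matrix.trace_sum]
      simp [twoSite, Matrix.trace, Matrix.diag, Fintype.sum_prod_type]
      exact Finset.sum_comm ..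
    rw [← h1, ← (hST X).1, htp, h2]
  ext i j
  have := key (Matrix.single j i 1)
  rwa [trace_mul_stdBasis, trace_mul_stdBasis] at this
end
end

section
/- Let H_A, H_X, H_B be finite-dimensional complex Hilbert spaces and let K be a subspace of H_A ⊗ H_X ⊗ H_B. Then K corresponds to a parent commuting Hamiltonian if and only if the regions A and B are decorrelated for K. -/
open scoped Matrix
open scoped InnerProductSpace ComplexConjugate

noncomputable section

/-- The orthogonal projection onto a subspace `K` of a finite-dimensional Hilbert space,
as an endomorphism. -/
def projOnto {ι : Type} [Fintype ι]
    (K : Submodule ℂ (EuclideanSpace ℂ ι)) :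
    EuclideanSpace ℂ ι →ₗ[ℂ] EuclideanSpace ℂ ι :=
  K.subtype ∘ₗ (K.orthogonalProjection).toLinearMap

/-- `O_A ⊗ 1 ⊗ 1` acting on `H_A ⊗ H_X ⊗ H_B`, as a matrix. -/
def embA {a x b : ℕ} (O : Matrix (Fin a) (Fin a) ℂ) :
    Matrix (Fin a × Fin x × Fin b) (Fin a × Fin x × Fin b) ℂ :=
  fun u v => O u.1 v.1 * (if u.2 = v.2 then 1 else 0)

/-- `1 ⊗ 1 ⊗ O_B` acting on `H_A ⊗ H_X ⊗ H_B`, as a matrix. -/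
def embB {a x b : ℕ} (O : Matrix (Fin b) (Fin b) ℂ) :
    Matrix (Fin a × Fin x × Fin b) (Fin a × Fin x × Fin b) ℂ :=
  fun u v => (if (u.1, u.2.1) = (v.1, v.2.1) then 1 else 0) * O u.2.2 v.2.2

/-- `Q_{AX} ⊗ 1_B` acting on `H_A ⊗ H_X ⊗ H_B`, as a matrix. -/
def embAX {a x b : ℕ} (Q : Matrix (Fin a × Fin x) (Fin a × Fin x) ℂ) :
    Matrix (Fin a × Fin x × Fin b) (Fin a × Fin x × Fin b) ℂ :=
  fun u v => Q (u.1, u.2.1) (v.1, v.2.1) * (if u.2.2 = v.2.2 then 1 else 0)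

/-- `1_A ⊗ Q_{XB}` acting on `H_A ⊗ H_X ⊗ H_B`, as a matrix. -/
def embXB {a x b : ℕ} (Q : Matrix (Fin x × Fin b) (Fin x × Fin b) ℂ) :
    Matrix (Fin a × Fin x × Fin b) (Fin a × Fin x × Fin b) ℂ :=
  fun u v => (if u.1 = v.1 then 1 else 0) * Q (u.2.1, u.2.2) (v.2.1, v.2.2)

/-- The regions `A` and `B` are *decorrelated* for the subspace `K`: for all observables
`O_A` on `H_A` and `O_B` on `H_B`, `P O_A (1-P) O_B P = 0 = P O_B (1-P) O_A P`, where
`P` is the orthogonal projection onto `K`. -/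
def Decorrelated {a x b : ℕ}
    (K : Submodule ℂ (EuclideanSpace ℂ (Fin a × Fin x × Fin b))) : Prop :=
  ∀ (OA : Matrix (Fin a) (Fin a) ℂ) (OB : Matrix (Fin b) (Fin b) ℂ),
    projOnto K ∘ₗ Matrix.toEuclideanLin (embA OA) ∘ₗ (LinearMap.id - projOnto K) ∘ₗ
        Matrix.toEuclideanLin (embB OB) ∘ₗ projOnto K = 0 ∧
    projOnto K ∘ₗ Matrix.toEuclideanLin (embB OB) ∘ₗ (LinearMap.id - projOnto K) ∘ₗ
        Matrix.toEuclideanLin (embA OA) ∘ₗ projOnto K = 0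

/-- The subspace `K` *corresponds to a parent commuting Hamiltonian*: there exist
orthogonal projections `Q_{AX}` on `H_A ⊗ H_X` and `Q_{XB}` on `H_X ⊗ H_B` such that
`Q_{AX} ⊗ 1_B` and `1_A ⊗ Q_{XB}` commute and
`K = (ker Q_{AX} ⊗ H_B) ∩ (H_A ⊗ ker Q_{XB})`. -/
def ParentCommutingHamiltonian {a x b : ℕ}
    (K : Submodule ℂ (EuclideanSpace ℂ (Fin a × Fin x × Fin b))) : Prop :=
  ∃ (QAX : Matrix (Fin a × Fin x) (Fin a × Fin x) ℂ)
    (QXB : Matrix (Fin x × Fin b) (Fin x × Fin b) ℂ),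
    QAXᴴ = QAX ∧ QAX * QAX = QAX ∧
    QXBᴴ = QXB ∧ QXB * QXB = QXB ∧
    embAX (b := b) QAX * embXB QXB = embXB QXB * embAX QAX ∧
    K = LinearMap.ker (Matrix.toEuclideanLin (embAX (b := b) QAX)) ⊓
        LinearMap.ker (Matrix.toEuclideanLin (embXB (a := a) QXB))

namespace Aux
variable {ι : Type} [Fintype ι] {K U : Submodule ℂ (EuclideanSpace ℂ ι)}

lemma projOnto_mem (v : EuclideanSpace ℂ ι) : projOnto K v ∈ K :=
  (K.orthogonalProjection v).2

lemma projOnto_eq_self {v : EuclideanSpace ℂ ι} (h : v ∈ K) : projOnto K v = v := by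
  exact Submodule.starProjection_eq_self_iff.2 h

lemma projOnto_eq_zero {v : EuclideanSpace ℂ ι} (h : v ∈ Kᗮ) : projOnto K v = 0 := by
  show ((K.orthogonalProjectionOnto v : K) : EuclideanSpace ℂ ι) = 0
  rw [Submodule.orthogonalProjectionOnto_eq_zero_iff.2 h]
  rfl

lemma projOnto_eq_zero_iff {v : EuclideanSpace ℂ ι} : projOnto K v = 0 ↔ v ∈ Kᗮ := by
  constructor
  · intro h
    exact Submodule.orthogonalProjectionOnto_eq_zero_iff.1 (Submodule.coe_eq_zero.1 h)
  · exact projOnto_eq_zero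
  
lemma sub_projOnto_mem_orthogonal (v : EuclideanSpace ℂ ι) : v - projOnto K v ∈ Kᗮ :=
  Submodule.sub_starProjection_mem_orthogonal (K := K) v

lemma inner_projOnto (u v : EuclideanSpace ℂ ι) :
    ⟪projOnto K u, v⟫_ℂ = ⟪u, projOnto K v⟫_ℂ :=
  Submodule.inner_starProjection_left_eq_right K u v

lemma projOnto_idem (v : EuclideanSpace ℂ ι) : projOnto K (projOnto K v) = projOnto K v :=
  projOnto_eq_self (projOnto_mem v)

/-- uniqueness of the orthogonal projection -/
lemma projOnto_unique (T : EuclideanSpace ℂ ι →ₗ[ℂ] EuclideanSpace ℂ ι)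
    (h1 : ∀ v, T v ∈ K) (h2 : ∀ v, v - T v ∈ Kᗮ) : T = projOnto K := by
  ext v
  have := Submodule.eq_starProjection_of_mem_orthogonal (K := K) (u := v) (v := T v) (h1 v) (h2 v)
  simp [projOnto, ← this]

lemma adjoint_projOnto : LinearMap.adjoint (projOnto K) = projOnto K := by
  refine LinearMap.ext fun v => ?_
  refine ext_inner_left ℂ fun w => ?_
  rw [LinearMap.adjoint_inner_right, inner_projOnto]

lemma projOnto_orthogonal_apply (v : EuclideanSpace ℂ ι) :
    projOnto Kᗮ v = v - projOnto K v := by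
  have h := Submodule.starProjection_add_starProjection_orthogonal (K := K) v
  simp only [projOnto, LinearMap.comp_apply, ContinuousLinearMap.coe_coe,
    Submodule.subtype_apply]
  rw [eq_sub_iff_add_eq, add_comm]
  exact h

lemma projOnto_le_decomp (hKU : K ≤ U) (v : EuclideanSpace ℂ ι) :
    projOnto U v = projOnto K v + projOnto (U ⊓ Kᗮ) v := by
  have h1 : projOnto K v + projOnto (U ⊓ Kᗮ) v ∈ U :=
    U.add_mem (hKU (projOnto_mem v)) (Submodule.mem_inf.1 (projOnto_mem v)).1
  have h2 : ∀ w ∈ U, ⟪v - (projOnto K v + projOnto (U ⊓ Kᗮ) v), w⟫_ℂ = 0 := by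
    intro w hw
    have hw1 : w - projOnto K w ∈ U ⊓ Kᗮ :=
      Submodule.mem_inf.2 ⟨U.sub_mem hw (hKU (projOnto_mem w)), sub_projOnto_mem_orthogonal w⟩
    have hdec : w = projOnto K w + (w - projOnto K w) := by abel
    rw [hdec, inner_add_right]
    have e1 : ⟪v - (projOnto K v + projOnto (U ⊓ Kᗮ) v), projOnto K w⟫_ℂ = 0 := by
      have : v - (projOnto K v + projOnto (U ⊓ Kᗮ) v)
          = (v - projOnto K v) - projOnto (U ⊓ Kᗮ) v := by abel
      rw [this, inner_sub_left]
      rw [Submodule.inner_left_of_mem_orthogonal (projOnto_mem w) (sub_projOnto_mem_orthogonal v),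
        Submodule.inner_left_of_mem_orthogonal (projOnto_mem w)
          (Submodule.mem_inf.1 (projOnto_mem (K := U ⊓ Kᗮ) v)).2]
      ring
    have e2 : ⟪v - (projOnto K v + projOnto (U ⊓ Kᗮ) v), w - projOnto K w⟫_ℂ = 0 := by
      have : v - (projOnto K v + projOnto (U ⊓ Kᗮ) v)
          = (v - projOnto (U ⊓ Kᗮ) v) - projOnto K v := by abel
      rw [this, inner_sub_left]
      rw [Submodule.inner_left_of_mem_orthogonal hw1 (sub_projOnto_mem_orthogonal v),
        Submodule.inner_right_of_mem_orthogonal (projOnto_mem v) (Submodule.mem_inf.1 hw1).2]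
      ring
    rw [e1, e2]; ring
  have := Submodule.eq_starProjection_of_mem_of_inner_eq_zero (K := U) h1 h2
  simp [projOnto, this]


end Aux

namespace Aux
variable {a x b : ℕ}

lemma teul_apply {ι κ : Type} [Fintype ι] [Fintype κ] [DecidableEq κ]
    (M : Matrix ι κ ℂ) (v : EuclideanSpace ℂ κ) (u : ι) :
    Matrix.toEuclideanLin M v u = ∑ w, M u w * v w := rfl

lemma teul_mul {ι : Type} [Fintype ι] [DecidableEq ι] (M N : Matrix ι ι ℂ) :
    Matrix.toEuclideanLin (M * N) = Matrix.toEuclideanLin M ∘ₗ Matrix.toEuclideanLin N := by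
  ext v
  simp [Matrix.toEuclideanLin_apply, Matrix.mulVec_mulVec]

/-- the B-slice of a vector in `H_A ⊗ H_X ⊗ H_B` -/
def cB (β : Fin b) : EuclideanSpace ℂ (Fin a × Fin x × Fin b) →ₗ[ℂ]
    EuclideanSpace ℂ (Fin a × Fin x) where
  toFun h := WithLp.toLp 2 (fun p : Fin a × Fin x => h (p.1, p.2, β))
  map_add' _ _ := by ext; rfl
  map_smul' _ _ := by ext; rfl

/-- the A-slice of a vector in `H_A ⊗ H_X ⊗ H_B` -/
def cA (α : Fin a) : EuclideanSpace ℂ (Fin a × Fin x × Fin b) →ₗ[ℂ]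
    EuclideanSpace ℂ (Fin x × Fin b) where
  toFun h := WithLp.toLp 2 (fun q : Fin x × Fin b => h (α, q.1, q.2))
  map_add' _ _ := by ext; rfl
  map_smul' _ _ := by ext; rfl

/-- inserting a vector of `H_A ⊗ H_X` at B-coordinate β -/
def insB (β : Fin b) : EuclideanSpace ℂ (Fin a × Fin x) →ₗ[ℂ]
    EuclideanSpace ℂ (Fin a × Fin x × Fin b) where
  toFun v := WithLp.toLp 2 (fun u : Fin a × Fin x × Fin b => if u.2.2 = β then v (u.1, u.2.1) else 0)
  map_add' v w := by
    ext u
    by_cases h : u.2.2 = β <;> simp [h, Pi.add_apply]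
  map_smul' c v := by
    ext u
    by_cases h : u.2.2 = β <;> simp [h, Pi.smul_apply]

/-- inserting a vector of `H_X ⊗ H_B` at A-coordinate α -/
def insA (α : Fin a) : EuclideanSpace ℂ (Fin x × Fin b) →ₗ[ℂ]
    EuclideanSpace ℂ (Fin a × Fin x × Fin b) where
  toFun v := WithLp.toLp 2 (fun u : Fin a × Fin x × Fin b => if u.1 = α then v (u.2.1, u.2.2) else 0)
  map_add' v w := by
    ext u
    by_cases h : u.1 = α <;> simp [h, Pi.add_apply]
  map_smul' c v := by
    ext u
    by_cases h : u.1 = α <;> simp [h, Pi.smul_apply]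

lemma sum_insB_cB (h : EuclideanSpace ℂ (Fin a × Fin x × Fin b)) :
    ∑ β, insB β (cB β h) = h := by
  ext u
  rw [WithLp.ofLp_sum, Finset.sum_apply]
  simp only [insB, cB, LinearMap.coe_mk, AddHom.coe_mk, WithLp.ofLp_toLp]
  rw [Finset.sum_ite_eq Finset.univ u.2.2 (fun β => h (u.1, u.2.1, β))]
  simp

lemma sum_insA_cA (h : EuclideanSpace ℂ (Fin a × Fin x × Fin b)) :
    ∑ α, insA α (cA α h) = h := by
  ext u
  rw [WithLp.ofLp_sum, Finset.sum_apply]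
  simp only [insA, cA, LinearMap.coe_mk, AddHom.coe_mk, WithLp.ofLp_toLp]
  rw [Finset.sum_ite_eq Finset.univ u.1 (fun α => h (α, u.2.1, u.2.2))]
  simp


/-- reindexing equivalence -/
def eqvB {a x b : ℕ} : (Fin b × Fin a × Fin x) ≃ (Fin a × Fin x × Fin b) where
  toFun q := (q.2.1, q.2.2, q.1)
  invFun u := (u.2.2, u.1, u.2.1)
  left_inv := by rintro ⟨_, _, _⟩; rfl
  right_inv := by rintro ⟨_, _, _⟩; rfl

def eqvA {a x b : ℕ} : (Fin a × Fin x × Fin b) ≃ (Fin a × Fin x × Fin b) := Equiv.refl _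

lemma inner_cB (g h : EuclideanSpace ℂ (Fin a × Fin x × Fin b)) :
    ⟪g, h⟫_ℂ = ∑ β, ⟪cB β g, cB β h⟫_ℂ := by
  simp only [PiLp.inner_apply, RCLike.inner_apply, cB, LinearMap.coe_mk, AddHom.coe_mk,
    Fintype.sum_prod_type]
  exact (Finset.sum_congr rfl fun i _ => Finset.sum_comm).trans Finset.sum_comm

lemma inner_cA (g h : EuclideanSpace ℂ (Fin a × Fin x × Fin b)) :
    ⟪g, h⟫_ℂ = ∑ α, ⟪cA α g, cA α h⟫_ℂ := by
  simp only [PiLp.inner_apply, RCLike.inner_apply, cA, LinearMap.coe_mk, AddHom.coe_mk,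
    Fintype.sum_prod_type]

lemma cB_teul_embAX (Q : Matrix (Fin a × Fin x) (Fin a × Fin x) ℂ) (β : Fin b)
    (h : EuclideanSpace ℂ (Fin a × Fin x × Fin b)) :
    cB β (Matrix.toEuclideanLin (embAX Q) h) = Matrix.toEuclideanLin Q (cB β h) := by
  ext p
  simp only [cB, LinearMap.coe_mk, AddHom.coe_mk, teul_apply, embAX, Fintype.sum_prod_type]
  simp [mul_ite, Finset.sum_ite_eq', Finset.sum_ite_eq]

lemma cA_teul_embXB (Q : Matrix (Fin x × Fin b) (Fin x × Fin b) ℂ) (α : Fin a)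
    (h : EuclideanSpace ℂ (Fin a × Fin x × Fin b)) :
    cA α (Matrix.toEuclideanLin (embXB Q) h) = Matrix.toEuclideanLin Q (cA α h) := by
  ext p
  simp only [cA, LinearMap.coe_mk, AddHom.coe_mk, teul_apply, embXB, Fintype.sum_prod_type]
  simp [ite_mul, Finset.sum_ite_eq', Finset.sum_ite_eq]

lemma insB_cB_eq (β β' : Fin b) (h : EuclideanSpace ℂ (Fin a × Fin x × Fin b)) :
    insB β (cB β' h) =
      Matrix.toEuclideanLin (embB (Matrix.single β β' (1 : ℂ))) h := by
  ext u
  by_cases hc : u.2.2 = β <;>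
  simp [insB, cB, teul_apply, embB, Matrix.single, Fintype.sum_prod_type,
    ite_mul, mul_ite, Finset.sum_ite_eq', Finset.sum_ite_eq, ite_and, Prod.ext_iff,
    hc, fun h => (Ne.symm h : β ≠ u.2.2)]

lemma insA_cA_eq (α α' : Fin a) (h : EuclideanSpace ℂ (Fin a × Fin x × Fin b)) :
    insA α (cA α' h) =
      Matrix.toEuclideanLin (embA (x := x) (b := b) (Matrix.single α α' (1 : ℂ))) h := by
  ext u
  by_cases hc : u.1 = α <;>
  simp [insA, cA, teul_apply, embA, Matrix.single, Fintype.sum_prod_type,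
    ite_mul, mul_ite, Finset.sum_ite_eq', Finset.sum_ite_eq, ite_and, Prod.ext_iff,
    hc, fun h => (Ne.symm h : α ≠ u.1)]


lemma embAX_mul (Q Q' : Matrix (Fin a × Fin x) (Fin a × Fin x) ℂ) :
    embAX (b := b) (Q * Q') = embAX Q * embAX Q' := by
  ext u v
  obtain ⟨u1, u2, u3⟩ := u
  obtain ⟨v1, v2, v3⟩ := v
  simp [embAX, Matrix.mul_apply, Fintype.sum_prod_type, mul_ite, ite_mul,
    Finset.mul_sum, Finset.sum_mul, Finset.sum_ite_eq, Finset.sum_ite_eq']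

lemma embXB_mul (Q Q' : Matrix (Fin x × Fin b) (Fin x × Fin b) ℂ) :
    embXB (a := a) (Q * Q') = embXB Q * embXB Q' := by
  ext u v
  obtain ⟨u1, u2, u3⟩ := u
  obtain ⟨v1, v2, v3⟩ := v
  simp [embXB, Matrix.mul_apply, Fintype.sum_prod_type, mul_ite, ite_mul,
    Finset.mul_sum, Finset.sum_mul, Finset.sum_ite_eq, Finset.sum_ite_eq']

lemma embAX_conjT (Q : Matrix (Fin a × Fin x) (Fin a × Fin x) ℂ) :
    embAX (b := b) Qᴴ = (embAX Q)ᴴ := by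
  ext u v
  by_cases h : u.2.2 = v.2.2
  · simp [embAX, Matrix.conjTranspose_apply, h]
  · simp [embAX, Matrix.conjTranspose_apply, h, Ne.symm h]

lemma embXB_conjT (Q : Matrix (Fin x × Fin b) (Fin x × Fin b) ℂ) :
    embXB (a := a) Qᴴ = (embXB Q)ᴴ := by
  ext u v
  by_cases h : u.1 = v.1
  · simp [embXB, Matrix.conjTranspose_apply, h]
  · simp [embXB, Matrix.conjTranspose_apply, h, Ne.symm h]

lemma embA_comm_embXB (O : Matrix (Fin a) (Fin a) ℂ)
    (Q : Matrix (Fin x × Fin b) (Fin x × Fin b) ℂ) :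
    embA (x := x) O * embXB Q = embXB Q * embA O := by
  ext u v
  obtain ⟨u1, u2, u3⟩ := u
  obtain ⟨v1, v2, v3⟩ := v
  simp [embA, embXB, Matrix.mul_apply, Fintype.sum_prod_type, mul_ite, ite_mul,
    Finset.sum_ite_eq, Finset.sum_ite_eq', mul_comm]

lemma embB_comm_embAX (O : Matrix (Fin b) (Fin b) ℂ)
    (Q : Matrix (Fin a × Fin x) (Fin a × Fin x) ℂ) :
    embB (a := a) (x := x) O * embAX Q = embAX Q * embB O := by
  ext u v
  obtain ⟨u1, u2, u3⟩ := u
  obtain ⟨v1, v2, v3⟩ := v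
  simp [embB, embAX, Matrix.mul_apply, Fintype.sum_prod_type, mul_ite, ite_mul,
    Finset.sum_ite_eq, Finset.sum_ite_eq', mul_comm, Prod.ext_iff, ite_and]


lemma embB_conjT (O : Matrix (Fin b) (Fin b) ℂ) :
    embB (a := a) (x := x) Oᴴ = (embB O)ᴴ := by
  ext u v
  by_cases h : (u.1, u.2.1) = (v.1, v.2.1)
  · simp [embB, Matrix.conjTranspose_apply, h]
  · simp [embB, Matrix.conjTranspose_apply, h, Ne.symm h]

variable (K : Submodule ℂ (EuclideanSpace ℂ (Fin a × Fin x × Fin b)))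

/-- minimal subspace of `H_A ⊗ H_X` supporting `K` -/
def V1 : Submodule ℂ (EuclideanSpace ℂ (Fin a × Fin x)) :=
  Submodule.span ℂ {v | ∃ (β : Fin b) (k : _), k ∈ K ∧ v = cB β k}

def V2 : Submodule ℂ (EuclideanSpace ℂ (Fin x × Fin b)) :=
  Submodule.span ℂ {v | ∃ (α : Fin a) (k : _), k ∈ K ∧ v = cA α k}

/-- `V1 ⊗ H_B` -/
def Ut : Submodule ℂ (EuclideanSpace ℂ (Fin a × Fin x × Fin b)) :=
  ⨅ β, Submodule.comap (cB β) (V1 K)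

/-- `H_A ⊗ V2` -/
def Wt : Submodule ℂ (EuclideanSpace ℂ (Fin a × Fin x × Fin b)) :=
  ⨅ α, Submodule.comap (cA α) (V2 K)

lemma mem_Ut {h : EuclideanSpace ℂ (Fin a × Fin x × Fin b)} :
    h ∈ Ut K ↔ ∀ β, cB β h ∈ V1 K := by
  simp [Ut]

lemma mem_Wt {h : EuclideanSpace ℂ (Fin a × Fin x × Fin b)} :
    h ∈ Wt K ↔ ∀ α, cA α h ∈ V2 K := by
  simp [Wt]

lemma K_le_Ut : K ≤ Ut K := fun k hk =>
  (mem_Ut K).2 fun β => Submodule.subset_span ⟨β, k, hk, rfl⟩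

lemma K_le_Wt : K ≤ Wt K := fun k hk =>
  (mem_Wt K).2 fun α => Submodule.subset_span ⟨α, k, hk, rfl⟩

/-- generators : `B`-local operators applied to `K` -/
def SB : Set (EuclideanSpace ℂ (Fin a × Fin x × Fin b)) :=
  {w | ∃ (β β' : Fin b) (k : _), k ∈ K ∧ w = insB β (cB β' k)}

def SA : Set (EuclideanSpace ℂ (Fin a × Fin x × Fin b)) :=
  {w | ∃ (α α' : Fin a) (k : _), k ∈ K ∧ w = insA α (cA α' k)}

lemma mem_span_SB {h : EuclideanSpace ℂ (Fin a × Fin x × Fin b)} (hh : h ∈ Ut K) :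
    h ∈ Submodule.span ℂ (SB K) := by
  rw [← sum_insB_cB h]
  refine Submodule.sum_mem _ fun β _ => ?_
  have h1 : insB β (cB β h) ∈ Submodule.map (insB β) (V1 K) :=
    Submodule.mem_map_of_mem ((mem_Ut K).1 hh β)
  have h2 : Submodule.map (insB β) (V1 K) ≤ Submodule.span ℂ (SB K) := by
    rw [V1, Submodule.map_span]
    refine Submodule.span_mono ?_
    rintro - ⟨v, ⟨β', k, hk, rfl⟩, rfl⟩
    exact ⟨β, β', k, hk, rfl⟩
  exact h2 h1

lemma mem_span_SA {h : EuclideanSpace ℂ (Fin a × Fin x × Fin b)} (hh : h ∈ Wt K) :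
    h ∈ Submodule.span ℂ (SA K) := by
  rw [← sum_insA_cA h]
  refine Submodule.sum_mem _ fun α _ => ?_
  have h1 : insA α (cA α h) ∈ Submodule.map (insA α) (V2 K) :=
    Submodule.mem_map_of_mem ((mem_Wt K).1 hh α)
  have h2 : Submodule.map (insA α) (V2 K) ≤ Submodule.span ℂ (SA K) := by
    rw [V2, Submodule.map_span]
    refine Submodule.span_mono ?_
    rintro - ⟨v, ⟨α', k, hk, rfl⟩, rfl⟩
    exact ⟨α, α', k, hk, rfl⟩
  exact h2 h1

lemma decor_key (hD : Decorrelated K) (OA : Matrix (Fin a) (Fin a) ℂ)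
    (OB : Matrix (Fin b) (Fin b) ℂ) {k k' : EuclideanSpace ℂ (Fin a × Fin x × Fin b)}
    (hk : k ∈ K) (hk' : k' ∈ K) :
    ⟪Matrix.toEuclideanLin (embB OB) k - projOnto K (Matrix.toEuclideanLin (embB OB) k),
      Matrix.toEuclideanLin (embA OA) k' -
        projOnto K (Matrix.toEuclideanLin (embA OA) k')⟫_ℂ = 0 := by
  set u := Matrix.toEuclideanLin (embB OB) k with hu
  set v := Matrix.toEuclideanLin (embA OA) k' with hv
  have hC := (hD OA OBᴴ).2
  have step1 : ⟪u - projOnto K u, v - projOnto K v⟫_ℂ = ⟪u, v - projOnto K v⟫_ℂ := by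
    rw [inner_sub_left,
      Submodule.inner_right_of_mem_orthogonal (projOnto_mem u) (sub_projOnto_mem_orthogonal v)]
    ring
  have hadj : Matrix.toEuclideanLin (embB (a := a) (x := x) OBᴴ) =
      LinearMap.adjoint (Matrix.toEuclideanLin (embB OB)) := by
    rw [embB_conjT]
    exact Matrix.toEuclideanLin_conjTranspose_eq_adjoint _
  have step2 : ⟪u, v - projOnto K v⟫_ℂ =
      ⟪k, Matrix.toEuclideanLin (embB OBᴴ) (v - projOnto K v)⟫_ℂ := by
    rw [hadj, LinearMap.adjoint_inner_right]
  have step3 : ⟪k, Matrix.toEuclideanLin (embB OBᴴ) (v - projOnto K v)⟫_ℂ =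
      ⟪k, (projOnto K ∘ₗ Matrix.toEuclideanLin (embB OBᴴ) ∘ₗ (LinearMap.id - projOnto K) ∘ₗ
        Matrix.toEuclideanLin (embA OA) ∘ₗ projOnto K) k'⟫_ℂ := by
    simp only [LinearMap.comp_apply, LinearMap.sub_apply, LinearMap.id_apply]
    rw [projOnto_eq_self hk', ← hv]
    conv_lhs => rw [← projOnto_eq_self hk]
    rw [inner_projOnto]
  rw [step1, step2, step3, hC]
  simp

lemma U0_ortho_W0 (hD : Decorrelated K) {u w : EuclideanSpace ℂ (Fin a × Fin x × Fin b)}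
    (hu : u ∈ Ut K ⊓ Kᗮ) (hw : w ∈ Wt K ⊓ Kᗮ) : ⟪u, w⟫_ℂ = 0 := by
  set Pc : EuclideanSpace ℂ (Fin a × Fin x × Fin b) →ₗ[ℂ]
      EuclideanSpace ℂ (Fin a × Fin x × Fin b) := LinearMap.id - projOnto K with hPc
  have hPcu : Pc u = u := by
    simp [hPc, projOnto_eq_zero (Submodule.mem_inf.1 hu).2]
  have hPcw : Pc w = w := by
    simp [hPc, projOnto_eq_zero (Submodule.mem_inf.1 hw).2]
  have hu' : u ∈ Submodule.span ℂ (Pc '' SB K) := by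
    rw [← Submodule.map_span, ← hPcu]
    exact Submodule.mem_map_of_mem (mem_span_SB K (Submodule.mem_inf.1 hu).1)
  have hw' : w ∈ Submodule.span ℂ (Pc '' SA K) := by
    rw [← Submodule.map_span, ← hPcw]
    exact Submodule.mem_map_of_mem (mem_span_SA K (Submodule.mem_inf.1 hw).1)
  have hgen : ∀ g ∈ Pc '' SB K, ∀ g' ∈ Pc '' SA K, ⟪g, g'⟫_ℂ = 0 := by
    rintro - ⟨-, ⟨β, β', k, hk, rfl⟩, rfl⟩ - ⟨-, ⟨α, α', k', hk', rfl⟩, rfl⟩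
    simp only [hPc, LinearMap.sub_apply, LinearMap.id_apply]
    rw [insB_cB_eq, insA_cA_eq]
    exact decor_key K hD _ _ hk hk'
  have hOrtho : Submodule.span ℂ (Pc '' SB K) ⟂ Submodule.span ℂ (Pc '' SA K) :=
    Submodule.isOrtho_span.2 fun g hg g' hg' => hgen g hg g' hg'
  exact Submodule.inner_left_of_mem_orthogonal hw' (hOrtho hu')

lemma K_le_orth_inf_orth {S : Submodule ℂ (EuclideanSpace ℂ (Fin a × Fin x × Fin b))} :
    K ≤ (S ⊓ Kᗮ)ᗮ := by
  intro k hk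
  rw [Submodule.mem_orthogonal]
  intro s hs
  exact Submodule.inner_left_of_mem_orthogonal hk (Submodule.mem_inf.1 hs).2

lemma projUt_comp_projWt (hD : Decorrelated K) :
    projOnto (Ut K) ∘ₗ projOnto (Wt K) = projOnto K := by
  refine LinearMap.ext fun h => ?_
  rw [LinearMap.comp_apply, projOnto_le_decomp (K_le_Ut K), projOnto_le_decomp (K_le_Wt K) h,
    map_add, map_add]
  have h1 : projOnto K (projOnto K h) = projOnto K h := projOnto_idem h
  have h2 : projOnto K (projOnto (Wt K ⊓ Kᗮ) h) = 0 :=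
    projOnto_eq_zero (Submodule.mem_inf.1 (projOnto_mem h)).2
  have h3 : projOnto (Ut K ⊓ Kᗮ) (projOnto K h) = 0 :=
    projOnto_eq_zero (K_le_orth_inf_orth K (projOnto_mem h))
  have h4 : projOnto (Ut K ⊓ Kᗮ) (projOnto (Wt K ⊓ Kᗮ) h) = 0 := by
    refine projOnto_eq_zero ?_
    rw [Submodule.mem_orthogonal]
    intro s hs
    exact U0_ortho_W0 K hD hs (projOnto_mem h)
  rw [h1, h2, h3, h4]
  simp

lemma projWt_comp_projUt (hD : Decorrelated K) :
    projOnto (Wt K) ∘ₗ projOnto (Ut K) = projOnto K := by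
  refine LinearMap.ext fun h => ?_
  rw [LinearMap.comp_apply, projOnto_le_decomp (K_le_Wt K), projOnto_le_decomp (K_le_Ut K) h,
    map_add, map_add]
  have h1 : projOnto K (projOnto K h) = projOnto K h := projOnto_idem h
  have h2 : projOnto K (projOnto (Ut K ⊓ Kᗮ) h) = 0 :=
    projOnto_eq_zero (Submodule.mem_inf.1 (projOnto_mem h)).2
  have h3 : projOnto (Wt K ⊓ Kᗮ) (projOnto K h) = 0 :=
    projOnto_eq_zero (K_le_orth_inf_orth K (projOnto_mem h))
  have h4 : projOnto (Wt K ⊓ Kᗮ) (projOnto (Ut K ⊓ Kᗮ) h) = 0 := by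
    refine projOnto_eq_zero ?_
    rw [Submodule.mem_orthogonal]
    intro s hs
    rw [← inner_conj_symm]
    rw [U0_ortho_W0 K hD (projOnto_mem h) hs]
    simp
  rw [h1, h2, h3, h4]
  simp

/-- the slicewise projection onto `V1 ⊗ H_B` -/
def TU : EuclideanSpace ℂ (Fin a × Fin x × Fin b) →ₗ[ℂ]
    EuclideanSpace ℂ (Fin a × Fin x × Fin b) where
  toFun h := WithLp.toLp 2 (fun u : Fin a × Fin x × Fin b => projOnto (V1 K) (cB u.2.2 h) (u.1, u.2.1))
  map_add' g h := by
    ext u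
    show projOnto (V1 K) (cB u.2.2 (g + h)) (u.1, u.2.1) =
      projOnto (V1 K) (cB u.2.2 g) (u.1, u.2.1) + projOnto (V1 K) (cB u.2.2 h) (u.1, u.2.1)
    rw [map_add, map_add]
    rfl
  map_smul' c h := by
    ext u
    show projOnto (V1 K) (cB u.2.2 (c • h)) (u.1, u.2.1) =
      c • projOnto (V1 K) (cB u.2.2 h) (u.1, u.2.1)
    rw [map_smul, map_smul]
    rfl

def TW : EuclideanSpace ℂ (Fin a × Fin x × Fin b) →ₗ[ℂ]
    EuclideanSpace ℂ (Fin a × Fin x × Fin b) where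
  toFun h := WithLp.toLp 2 (fun u : Fin a × Fin x × Fin b => projOnto (V2 K) (cA u.1 h) (u.2.1, u.2.2))
  map_add' g h := by
    ext u
    show projOnto (V2 K) (cA u.1 (g + h)) (u.2.1, u.2.2) =
      projOnto (V2 K) (cA u.1 g) (u.2.1, u.2.2) + projOnto (V2 K) (cA u.1 h) (u.2.1, u.2.2)
    rw [map_add, map_add]
    rfl
  map_smul' c h := by
    ext u
    show projOnto (V2 K) (cA u.1 (c • h)) (u.2.1, u.2.2) =
      c • projOnto (V2 K) (cA u.1 h) (u.2.1, u.2.2)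
    rw [map_smul, map_smul]
    rfl

lemma cB_TU (β : Fin b) (h : EuclideanSpace ℂ (Fin a × Fin x × Fin b)) :
    cB β (TU K h) = projOnto (V1 K) (cB β h) := rfl

lemma cA_TW (α : Fin a) (h : EuclideanSpace ℂ (Fin a × Fin x × Fin b)) :
    cA α (TW K h) = projOnto (V2 K) (cA α h) := rfl

lemma TU_eq_projUt : TU K = projOnto (Ut K) := by
  refine projOnto_unique _ (fun v => ?_) (fun v => ?_)
  · exact (mem_Ut K).2 fun β => by rw [cB_TU]; exact projOnto_mem _
  · rw [Submodule.mem_orthogonal]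
    intro w hw
    rw [inner_cB]
    refine Finset.sum_eq_zero fun β _ => ?_
    rw [map_sub, cB_TU]
    exact Submodule.inner_right_of_mem_orthogonal ((mem_Ut K).1 hw β)
      (sub_projOnto_mem_orthogonal _)
  
lemma TW_eq_projWt : TW K = projOnto (Wt K) := by
  refine projOnto_unique _ (fun v => ?_) (fun v => ?_)
  · exact (mem_Wt K).2 fun α => by rw [cA_TW]; exact projOnto_mem _
  · rw [Submodule.mem_orthogonal]
    intro w hw
    rw [inner_cA]
    refine Finset.sum_eq_zero fun α _ => ?_
    rw [map_sub, cA_TW]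
    exact Submodule.inner_right_of_mem_orthogonal ((mem_Wt K).1 hw α)
      (sub_projOnto_mem_orthogonal _)

lemma projOnto_eq_self_iff {ι : Type} [Fintype ι] {S : Submodule ℂ (EuclideanSpace ℂ ι)}
    {v : EuclideanSpace ℂ ι} : projOnto S v = v ↔ v ∈ S :=
  ⟨fun h => h ▸ projOnto_mem v, projOnto_eq_self⟩

def QAXm : Matrix (Fin a × Fin x) (Fin a × Fin x) ℂ :=
  Matrix.toEuclideanLin.symm (projOnto (V1 K)ᗮ)

def QXBm : Matrix (Fin x × Fin b) (Fin x × Fin b) ℂ :=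
  Matrix.toEuclideanLin.symm (projOnto (V2 K)ᗮ)

lemma teul_QAXm : Matrix.toEuclideanLin (QAXm K) = projOnto (V1 K)ᗮ :=
  LinearEquiv.apply_symm_apply _ _

lemma teul_QXBm : Matrix.toEuclideanLin (QXBm K) = projOnto (V2 K)ᗮ :=
  LinearEquiv.apply_symm_apply _ _

lemma teul_embAX_QAXm :
    Matrix.toEuclideanLin (embAX (b := b) (QAXm K)) = LinearMap.id - TU K := by
  refine LinearMap.ext fun h => ?_
  ext u
  obtain ⟨u1, u2, u3⟩ := u
  have h1 : Matrix.toEuclideanLin (embAX (QAXm K)) h (u1, u2, u3)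
      = (cB u3 (Matrix.toEuclideanLin (embAX (QAXm K)) h)) (u1, u2) := rfl
  rw [h1, cB_teul_embAX, teul_QAXm, projOnto_orthogonal_apply]
  rfl

lemma teul_embXB_QXBm :
    Matrix.toEuclideanLin (embXB (a := a) (QXBm K)) = LinearMap.id - TW K := by
  refine LinearMap.ext fun h => ?_
  ext u
  obtain ⟨u1, u2, u3⟩ := u
  have h1 : Matrix.toEuclideanLin (embXB (QXBm K)) h (u1, u2, u3)
      = (cA u1 (Matrix.toEuclideanLin (embXB (QXBm K)) h)) (u2, u3) := rfl
  rw [h1, cA_teul_embXB, teul_QXBm, projOnto_orthogonal_apply]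
  rfl

lemma ker_teul_embAX :
    LinearMap.ker (Matrix.toEuclideanLin (embAX (b := b) (QAXm K))) = Ut K := by
  rw [teul_embAX_QAXm, TU_eq_projUt]
  ext h
  rw [LinearMap.mem_ker, LinearMap.sub_apply, LinearMap.id_apply, sub_eq_zero, eq_comm,
    projOnto_eq_self_iff]

lemma ker_teul_embXB :
    LinearMap.ker (Matrix.toEuclideanLin (embXB (a := a) (QXBm K))) = Wt K := by
  rw [teul_embXB_QXBm, TW_eq_projWt]
  ext h
  rw [LinearMap.mem_ker, LinearMap.sub_apply, LinearMap.id_apply, sub_eq_zero, eq_comm,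
    projOnto_eq_self_iff]

lemma QAXm_herm : (QAXm K)ᴴ = QAXm K := by
  apply Matrix.toEuclideanLin.injective
  rw [Matrix.toEuclideanLin_conjTranspose_eq_adjoint, teul_QAXm, adjoint_projOnto]

lemma QXBm_herm : (QXBm K)ᴴ = QXBm K := by
  apply Matrix.toEuclideanLin.injective
  rw [Matrix.toEuclideanLin_conjTranspose_eq_adjoint, teul_QXBm, adjoint_projOnto]

lemma QAXm_idem : QAXm K * QAXm K = QAXm K := by
  apply Matrix.toEuclideanLin.injective
  rw [teul_mul, teul_QAXm]
  exact LinearMap.ext fun v => projOnto_idem v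

lemma QXBm_idem : QXBm K * QXBm K = QXBm K := by
  apply Matrix.toEuclideanLin.injective
  rw [teul_mul, teul_QXBm]
  exact LinearMap.ext fun v => projOnto_idem v

lemma emb_comm (hD : Decorrelated K) :
    embAX (b := b) (QAXm K) * embXB (QXBm K) = embXB (QXBm K) * embAX (QAXm K) := by
  apply Matrix.toEuclideanLin.injective
  rw [teul_mul, teul_mul, teul_embAX_QAXm, teul_embXB_QXBm, TU_eq_projUt, TW_eq_projWt]
  refine LinearMap.ext fun h => ?_
  have e1 := LinearMap.congr_fun (projUt_comp_projWt K hD) h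
  have e2 := LinearMap.congr_fun (projWt_comp_projUt K hD) h
  simp only [LinearMap.comp_apply] at e1 e2 ⊢
  simp only [LinearMap.sub_apply, LinearMap.id_apply, map_sub]
  rw [e1, e2]
  abel

lemma K_eq (hD : Decorrelated K) :
    K = LinearMap.ker (Matrix.toEuclideanLin (embAX (b := b) (QAXm K))) ⊓
        LinearMap.ker (Matrix.toEuclideanLin (embXB (a := a) (QXBm K))) := by
  rw [ker_teul_embAX, ker_teul_embXB]
  refine le_antisymm (le_inf (K_le_Ut K) (K_le_Wt K)) ?_
  intro h hm
  obtain ⟨h1, h2⟩ := Submodule.mem_inf.1 hm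
  have e1 := LinearMap.congr_fun (projUt_comp_projWt K hD) h
  simp only [LinearMap.comp_apply] at e1
  rw [projOnto_eq_self h2, projOnto_eq_self h1] at e1
  rw [e1]
  exact projOnto_mem h

lemma ring_trick {R : Type} [Ring R] {g₁ g₂ e f : R} (h₁ : g₁ * g₁ = g₁) (h₂ : g₂ * g₂ = g₂)
    (hc : g₁ * g₂ = g₂ * g₁) (he : e * g₂ = g₂ * e) (hf : f * g₁ = g₁ * f) :
    (g₁ * g₂) * (e * ((1 - g₁ * g₂) * (f * (g₁ * g₂)))) = 0 := by
  have h₁' : ∀ z, g₁ * (g₁ * z) = g₁ * z := fun z => by rw [← mul_assoc, h₁]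
  have h₂' : ∀ z, g₂ * (g₂ * z) = g₂ * z := fun z => by rw [← mul_assoc, h₂]
  have hc' : ∀ z, g₁ * (g₂ * z) = g₂ * (g₁ * z) := fun z => by
    rw [← mul_assoc, hc, mul_assoc]
  have he' : ∀ z, e * (g₂ * z) = g₂ * (e * z) := fun z => by rw [← mul_assoc, he, mul_assoc]
  have hf' : ∀ z, g₁ * (f * z) = f * (g₁ * z) := fun z => by rw [← mul_assoc, ← hf, mul_assoc]
  simp only [mul_sub, sub_mul, mul_one, one_mul, mul_assoc]
  simp only [h₁', h₂', hc', he', hf', h₁, h₂, hc, he, hf.symm]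
  abel

lemma easy (QAX : Matrix (Fin a × Fin x) (Fin a × Fin x) ℂ)
    (QXB : Matrix (Fin x × Fin b) (Fin x × Fin b) ℂ)
    (hermAX : QAXᴴ = QAX) (idemAX : QAX * QAX = QAX)
    (hermXB : QXBᴴ = QXB) (idemXB : QXB * QXB = QXB)
    (hcomm : embAX (b := b) QAX * embXB QXB = embXB QXB * embAX QAX)
    (hK : K = LinearMap.ker (Matrix.toEuclideanLin (embAX (b := b) QAX)) ⊓
        LinearMap.ker (Matrix.toEuclideanLin (embXB (a := a) QXB))) :
    Decorrelated K := by
  set E₁ := Matrix.toEuclideanLin (embAX (b := b) QAX) with hE₁def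
  set E₂ := Matrix.toEuclideanLin (embXB (a := a) QXB) with hE₂def
  have hE1 : E₁ * E₁ = E₁ := by
    show Matrix.toEuclideanLin (embAX QAX) ∘ₗ Matrix.toEuclideanLin (embAX QAX)
      = Matrix.toEuclideanLin (embAX QAX)
    rw [← teul_mul, ← embAX_mul, idemAX]
  have hE2 : E₂ * E₂ = E₂ := by
    show Matrix.toEuclideanLin (embXB QXB) ∘ₗ Matrix.toEuclideanLin (embXB QXB)
      = Matrix.toEuclideanLin (embXB QXB)
    rw [← teul_mul, ← embXB_mul, idemXB]
  have hE12 : E₁ * E₂ = E₂ * E₁ := by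
    show Matrix.toEuclideanLin (embAX QAX) ∘ₗ Matrix.toEuclideanLin (embXB QXB)
      = Matrix.toEuclideanLin (embXB QXB) ∘ₗ Matrix.toEuclideanLin (embAX QAX)
    rw [← teul_mul, ← teul_mul, hcomm]
  have hE1adj : LinearMap.adjoint E₁ = E₁ := by
    rw [hE₁def, ← Matrix.toEuclideanLin_conjTranspose_eq_adjoint, ← embAX_conjT, hermAX]
  have hE2adj : LinearMap.adjoint E₂ = E₂ := by
    rw [hE₂def, ← Matrix.toEuclideanLin_conjTranspose_eq_adjoint, ← embXB_conjT, hermXB]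
  set g₁ : Module.End ℂ (EuclideanSpace ℂ (Fin a × Fin x × Fin b)) := 1 - E₁ with hg₁def
  set g₂ : Module.End ℂ (EuclideanSpace ℂ (Fin a × Fin x × Fin b)) := 1 - E₂ with hg₂def
  have hg1 : g₁ * g₁ = g₁ := by
    rw [hg₁def]
    simp only [mul_sub, sub_mul, one_mul, mul_one, hE1]
    abel
  have hg2 : g₂ * g₂ = g₂ := by
    rw [hg₂def]
    simp only [mul_sub, sub_mul, one_mul, mul_one, hE2]
    abel
  have hgc : g₁ * g₂ = g₂ * g₁ := by
    rw [hg₁def, hg₂def]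
    simp only [mul_sub, sub_mul, one_mul, mul_one, hE12]
    abel
  have c0 : E₁ * g₁ = 0 := by rw [hg₁def, mul_sub, mul_one, hE1, sub_self]
  have c1 : E₂ * g₁ = g₁ * E₂ := by
    rw [hg₁def]
    simp only [mul_sub, sub_mul, one_mul, mul_one, hE12]
  have c2 : E₂ * g₂ = 0 := by rw [hg₂def, mul_sub, mul_one, hE2, sub_self]
  have z1 : E₁ * (g₁ * g₂) = 0 := by rw [← mul_assoc, c0, zero_mul]
  have z2 : E₂ * (g₁ * g₂) = 0 := by rw [← mul_assoc, c1, mul_assoc, c2, mul_zero]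
  have hmemK : ∀ v, v ∈ K ↔ E₁ v = 0 ∧ E₂ v = 0 := by
    intro v
    rw [hK]
    simp [Submodule.mem_inf, LinearMap.mem_ker]
  have hP : projOnto K = g₁ * g₂ := by
    refine (projOnto_unique (g₁ * g₂) (fun v => ?_) (fun v => ?_)).symm
    · rw [hmemK]
      refine ⟨?_, ?_⟩
      · simpa using LinearMap.congr_fun z1 v
      · simpa using LinearMap.congr_fun z2 v
    · rw [Submodule.mem_orthogonal]
      intro k hk
      obtain ⟨hk1, hk2⟩ := (hmemK k).1 hk
      have expand : v - (g₁ * g₂) v = E₂ v + E₁ (v - E₂ v) := by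
        show v - g₁ (g₂ v) = E₂ v + E₁ (v - E₂ v)
        have e1 : g₂ v = v - E₂ v := rfl
        have e2 : ∀ w, g₁ w = w - E₁ w := fun w => rfl
        rw [e1, e2]
        abel
      rw [expand, inner_add_right]
      have i1 : ⟪k, E₂ v⟫_ℂ = 0 := by
        rw [← hE2adj, LinearMap.adjoint_inner_right, hk2, inner_zero_left]
      have i2 : ⟪k, E₁ (v - E₂ v)⟫_ℂ = 0 := by
        rw [← hE1adj, LinearMap.adjoint_inner_right, hk1, inner_zero_left]
      rw [i1, i2, add_zero]
  intro OA OB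
  set e := Matrix.toEuclideanLin (embA (x := x) (b := b) OA) with hedef
  set f := Matrix.toEuclideanLin (embB (a := a) (x := x) OB) with hfdef
  have hef2 : e * g₂ = g₂ * e := by
    have hcm : e * E₂ = E₂ * e := by
      show Matrix.toEuclideanLin (embA OA) ∘ₗ Matrix.toEuclideanLin (embXB QXB)
        = Matrix.toEuclideanLin (embXB QXB) ∘ₗ Matrix.toEuclideanLin (embA OA)
      rw [← teul_mul, ← teul_mul, embA_comm_embXB]
    rw [hg₂def]
    simp only [mul_sub, sub_mul, mul_one, one_mul, hcm]
  have hef1 : f * g₁ = g₁ * f := by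
    have hcm : f * E₁ = E₁ * f := by
      show Matrix.toEuclideanLin (embB OB) ∘ₗ Matrix.toEuclideanLin (embAX QAX)
        = Matrix.toEuclideanLin (embAX QAX) ∘ₗ Matrix.toEuclideanLin (embB OB)
      rw [← teul_mul, ← teul_mul, embB_comm_embAX]
    rw [hg₁def]
    simp only [mul_sub, sub_mul, mul_one, one_mul, hcm]
  constructor
  · show projOnto K * (e * ((1 - projOnto K) * (f * projOnto K))) = 0
    rw [hP]
    exact ring_trick hg1 hg2 hgc hef2 hef1
  · show projOnto K * (f * ((1 - projOnto K) * (e * projOnto K))) = 0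
    rw [hP, hgc]
    exact ring_trick hg2 hg1 hgc.symm hef1 hef2
end Aux

/-- A subspace `K ⊆ H_A ⊗ H_X ⊗ H_B` corresponds to a parent commuting Hamiltonian if
and only if the regions `A` and `B` are decorrelated for `K`. -/
theorem parent_commuting_iff_decorrelated {a x b : ℕ}
    (K : Submodule ℂ (EuclideanSpace ℂ (Fin a × Fin x × Fin b))) :
    ParentCommutingHamiltonian K ↔ Decorrelated K := by
  constructor
  · rintro ⟨QAX, QXB, h1, h2, h3, h4, h5, h6⟩
    exact Aux.easy K QAX QXB h1 h2 h3 h4 h5 h6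
  · intro hD
    exact ⟨Aux.QAXm K, Aux.QXBm K, Aux.QAXm_herm K, Aux.QAXm_idem K, Aux.QXBm_herm K,
      Aux.QXBm_idem K, Aux.emb_comm K hD, Aux.K_eq K hD⟩
end
end

section
/- Let N : {0,1}³ → ℝ be any function such that N_{ijk} = 0 if exactly two of i, j, k are equal to 0, and N_{ijk} > 0 otherwise. For each (i,j,k) ∈ {0,1}³ define the 2×2 matrix A^{ijk} with entries A^{ijk}_{α,β} = δ_{i,α} δ_{k,β} N_{ijk} (α, β ∈ {0,1}), and for N ≥ 1 let ρ^(N) be the diagonal 8^N × 8^N matrix whose diagonal entry indexed by (i_1,j_1,k_1,…,i_N,j_N,k_N) is tr(A^{i_1 j_1 k_1} ··· A^{i_N j_N k_N}). Then rank(ρ^(N)) = τ₊^{2N} + τ₋^{2N}, where τ₊ = (1+√5)/2 and τ₋ = (1−√5)/2. -/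
noncomputable section

/-- Exactly two of the three indices are `0`. -/
def twoZeros (v : Fin 2 × Fin 2 × Fin 2) : Prop :=
  (v.1 = 0 ∧ v.2.1 = 0 ∧ v.2.2 ≠ 0) ∨
  (v.1 = 0 ∧ v.2.1 ≠ 0 ∧ v.2.2 = 0) ∨
  (v.1 ≠ 0 ∧ v.2.1 = 0 ∧ v.2.2 = 0)

/-- The Fibonacci boundary tensor: `A^{ijk}_{α,β} = δ_{i,α} δ_{k,β} N_{ijk}`. -/
def fibA (Nf : Fin 2 × Fin 2 × Fin 2 → ℝ) (v : Fin 2 × Fin 2 × Fin 2) :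
    Matrix (Fin 2) (Fin 2) ℂ :=
  fun α β => if v.1 = α ∧ v.2.2 = β then (Nf v : ℂ) else 0

/-- The diagonal MPDO of length `N` generated by the Fibonacci boundary tensor with
periodic boundary conditions. -/
def fibRho (Nf : Fin 2 × Fin 2 × Fin 2 → ℝ) (N : ℕ) :
    Matrix (Fin N → Fin 2 × Fin 2 × Fin 2) (Fin N → Fin 2 × Fin 2 × Fin 2) ℂ :=
  Matrix.diagonal fun is => Matrix.trace (List.ofFn fun n => fibA Nf (is n)).prod

/- ### Auxiliary material -/

open Matrix

instance : DecidablePred twoZeros := fun v => by unfold twoZeros; infer_instance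

namespace FibAux

/-- The chaining relation for products of standard basis matrices. -/
def chR (s t : Fin 2 × Fin 2 × ℂ) : Prop := s.2.1 = t.1

instance : DecidableRel chR := fun s t => inferInstanceAs (Decidable (s.2.1 = t.1))

/-- Product of a nonempty list of standard basis matrices. -/
theorem prodStd : ∀ (l : List (Fin 2 × Fin 2 × ℂ)) (h : l ≠ []),
    (l.map fun t => single t.1 t.2.1 t.2.2).prod =
      if l.IsChain chR
      then single (l.head h).1 (l.getLast h).2.1 (l.map (fun t => t.2.2)).prod
      else 0
  | [], h => absurd rfl h
  | [t], _ => by simp [chR, List.isChain_singleton]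
  | t :: u :: l, _ => by
    have ih := prodStd (u :: l) (by simp)
    rw [List.map_cons, List.prod_cons, ih]
    by_cases hc : (u :: l).IsChain chR
    · rw [if_pos hc]
      by_cases ht : chR t u
      · rw [if_pos (List.isChain_cons_cons.2 ⟨ht, hc⟩),
          List.getLast_cons_cons, List.head_cons, List.head_cons, List.map_cons,
          List.prod_cons, ← ht, Matrix.single_mul_single_same]
        simp
      · rw [List.head_cons, Matrix.single_mul_single_of_ne (h := ht),
          if_neg (fun hch => ht (List.isChain_cons_cons.1 hch).1)]
    · rw [if_neg hc, mul_zero,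
        if_neg (fun hch => hc (List.isChain_cons_cons.1 hch).2)]

/-- The transfer matrix entries, as natural numbers. -/
def T (a b : Fin 2) : ℕ := if a = 1 ∧ b = 1 then 2 else 1

theorem card_j (a b : Fin 2) :
    Fintype.card {j : Fin 2 // ¬ twoZeros (a, j, b)} = T a b := by
  fin_cases a <;> fin_cases b <;> decide

/-- The transfer matrix. -/
def Mfib : Matrix (Fin 2) (Fin 2) ℝ := !![1, 1; 1, 2]

theorem T_cast (a b : Fin 2) : (T a b : ℝ) = Mfib a b := by
  fin_cases a <;> fin_cases b <;> simp [T, Mfib] <;> norm_num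

/-- Path-sum expansion of powers of a `2 × 2` matrix. -/
theorem pathSum (M : Matrix (Fin 2) (Fin 2) ℝ) : ∀ (n : ℕ) (a b : Fin 2),
    (M ^ (n + 1)) a b =
      ∑ g : Fin (n + 1) → Fin 2,
        if g 0 = a then (∏ k : Fin n, M (g k.castSucc) (g k.succ)) * M (g (Fin.last n)) b
        else 0
  | 0, a, b => by
    rw [pow_one, ← Equiv.sum_comp (Equiv.funUnique (Fin 1) (Fin 2)).symm]
    simp [Finset.sum_ite_eq']
  | n + 1, a, b => by
    have key : ∀ F : (Fin (n + 2) → Fin 2) → ℝ,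
        ∑ f, F f = ∑ x : Fin 2, ∑ g : Fin (n + 1) → Fin 2, F (Fin.snoc g x) := by
      intro F
      rw [← Equiv.sum_comp (Fin.snocEquiv (fun _ => Fin 2)) F, Fintype.sum_prod_type]
      rfl
    rw [pow_succ, Matrix.mul_apply]
    simp_rw [pathSum M n, Finset.sum_mul]
    rw [key (fun f => if f 0 = a
      then (∏ k : Fin (n + 1), M (f k.castSucc) (f k.succ)) * M (f (Fin.last (n + 1))) b
      else 0)]
    refine Finset.sum_congr rfl fun x _ => Finset.sum_congr rfl fun g _ => ?_
    have h0 : (Fin.snoc g x : Fin (n + 2) → Fin 2) 0 = g 0 := by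
      rw [show (0 : Fin (n + 2)) = Fin.castSucc 0 from rfl, Fin.snoc_castSucc]
    simp only [Fin.prod_univ_castSucc]
    simp only [h0, Fin.succ_castSucc, Fin.snoc_castSucc, Fin.succ_last, Fin.snoc_last]
    rw [ite_mul, zero_mul, mul_assoc]

/-- Trace of a power as a sum over cyclic paths. -/
theorem traceCycle (M : Matrix (Fin 2) (Fin 2) ℝ) (m : ℕ) :
    Matrix.trace (M ^ (m + 1)) =
      ∑ g : Fin (m + 1) → Fin 2, ∏ n : Fin (m + 1), M (g n) (g (n + 1)) := by
  rw [Matrix.trace]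
  simp_rw [Matrix.diag, pathSum M m]
  rw [Finset.sum_comm]
  refine Finset.sum_congr rfl fun g _ => ?_
  rw [Finset.sum_ite_eq Finset.univ (g 0)
    (fun a => (∏ k : Fin m, M (g k.castSucc) (g k.succ)) * M (g (Fin.last m)) a),
    if_pos (Finset.mem_univ _)]
  rw [Fin.prod_univ_castSucc (f := fun n : Fin (m + 1) => M (g n) (g (n + 1)))]
  simp [Fin.coeSucc_eq_succ, Fin.last_add_one]

theorem trace_fib_pow_aux (x y : ℝ) (hx2 : x * x = 3 * x - 1) (hy2 : y * y = 3 * y - 1)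
    (hxy : x + y = 3) :
    ∀ k, Matrix.trace (Mfib ^ k) = x ^ k + y ^ k ∧
      Matrix.trace (Mfib ^ (k + 1)) = x ^ (k + 1) + y ^ (k + 1) := by
  have hM2 : Mfib * Mfib = (3 : ℝ) • Mfib - 1 := by
    ext i j
    fin_cases i <;> fin_cases j <;>
      simp [Mfib, Matrix.mul_apply, Fin.sum_univ_two, Matrix.one_apply] <;> norm_num
  intro k
  induction k with
  | zero =>
    constructor
    · simp; norm_num
    · rw [pow_one, pow_one, pow_one]
      have : Matrix.trace Mfib = 3 := by simp [Mfib, Matrix.trace_fin_two]; norm_num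
      rw [this, hxy]
  | succ k ih =>
    refine ⟨ih.2, ?_⟩
    have hpow : Mfib ^ (k + 2) = (3 : ℝ) • Mfib ^ (k + 1) - Mfib ^ k := by
      have : Mfib ^ (k + 2) = Mfib ^ k * (Mfib * Mfib) := by
        rw [pow_succ, pow_succ, mul_assoc]
      rw [this, hM2, mul_sub, mul_one, mul_smul_comm, ← pow_succ]
    rw [hpow, Matrix.trace_sub, Matrix.trace_smul, ih.1, ih.2, smul_eq_mul]
    linear_combination (-(x ^ k)) * hx2 + (-(y ^ k)) * hy2

theorem trace_fib_pow (n : ℕ) :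
    Matrix.trace (Mfib ^ n) =
      (((1 + Real.sqrt 5) / 2) ^ 2) ^ n + (((1 - Real.sqrt 5) / 2) ^ 2) ^ n := by
  have hs : Real.sqrt 5 ^ 2 = 5 := Real.sq_sqrt (by norm_num)
  refine (trace_fib_pow_aux _ _ ?_ ?_ ?_ n).1
  · linear_combination ((Real.sqrt 5 ^ 2 + 4 * Real.sqrt 5 - 1) / 16) * hs
  · linear_combination ((Real.sqrt 5 ^ 2 - 4 * Real.sqrt 5 - 1) / 16) * hs
  · linear_combination (1 / 2 : ℝ) * hs

/-- Characterization of the nonzero diagonal entries. -/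
theorem trace_ne_iff (Nf : Fin 2 × Fin 2 × Fin 2 → ℝ)
    (h0 : ∀ v, twoZeros v → Nf v = 0)
    (hpos : ∀ v, ¬ twoZeros v → 0 < Nf v)
    (m : ℕ) (is : Fin (m + 1) → Fin 2 × Fin 2 × Fin 2) :
    Matrix.trace (List.ofFn fun n => fibA Nf (is n)).prod ≠ 0 ↔
      ∀ n : Fin (m + 1), (is n).2.2 = (is (n + 1)).1 ∧ ¬ twoZeros (is n) := by
  have hNf : ∀ v, Nf v ≠ 0 ↔ ¬ twoZeros v := by
    intro v
    constructor
    · intro h htz; exact h (h0 v htz)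
    · intro h; exact ne_of_gt (hpos v h)
  set w : Fin (m + 1) → Fin 2 × Fin 2 × ℂ :=
    fun n => ((is n).1, (is n).2.2, (Nf (is n) : ℂ)) with hw
  have hfib : (List.ofFn fun n => fibA Nf (is n)) =
      (List.ofFn w).map (fun t => single t.1 t.2.1 t.2.2) := by
    rw [List.map_ofFn]; rfl
  have hne : List.ofFn w ≠ [] := by
    intro h; have := congrArg List.length h; simp at this
  have hhead : ((List.ofFn w).head hne) = w 0 := by
    rw [List.head_ofFn]
    congr 1
  have hlast : ((List.ofFn w).getLast hne) = w (Fin.last m) := by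
    rw [List.getLast_eq_getElem, List.getElem_ofFn]
    congr 1
    ext
    simp
  have hprodc : ((List.ofFn w).map (fun t => t.2.2)).prod = ∏ n, ((Nf (is n) : ℂ)) := by
    rw [List.map_ofFn, List.prod_ofFn]; rfl
  have hchain : (List.ofFn w).IsChain chR ↔
      ∀ n : Fin (m + 1), n ≠ Fin.last m → (is n).2.2 = (is (n + 1)).1 := by
    rw [List.isChain_iff_getElem]
    constructor
    · intro h n hn
      have hlt : (n : ℕ) < m := by
        rcases Nat.lt_or_ge (n : ℕ) m with h' | h'
        · exact h'
        · exact absurd (Fin.ext (le_antisymm (Nat.lt_succ_iff.1 n.isLt) h')) hn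
      have := h (n : ℕ) (by simpa using hlt)
      simp only [List.getElem_ofFn] at this
      have hn1 : (n + 1 : Fin (m + 1)) = ⟨(n : ℕ) + 1, by omega⟩ := by
        ext
        rw [Fin.val_add_one, if_neg hn]
      rw [hn1]
      exact this
    · intro h i hi
      simp only [List.length_ofFn] at hi
      have hi' : i < m := by omega
      have := h ⟨i, by omega⟩ (by
        intro hc
        have := congrArg Fin.val hc
        simp at this
        omega)
      simp only [List.getElem_ofFn]
      have hn1 : ((⟨i, by omega⟩ : Fin (m + 1)) + 1) = ⟨i + 1, by omega⟩ := by
        ext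
        rw [Fin.val_add_one, if_neg (by
          intro hc
          have := congrArg Fin.val hc
          simp at this
          omega)]
      rw [hn1] at this
      exact this
  rw [hfib, prodStd _ hne]
  constructor
  · intro htr
    have hch : (List.ofFn w).IsChain chR := by
      by_contra hc
      rw [if_neg hc] at htr
      simp at htr
    rw [if_pos hch] at htr
    have hcyc : ((List.ofFn w).getLast hne).2.1 = ((List.ofFn w).head hne).1 := by
      by_contra hc
      exact htr (Matrix.trace_single_eq_of_ne _ _ _ (Ne.symm hc))
    rw [hcyc, Matrix.trace_single_eq_same, hprodc] at htr
    have hall : ∀ n, Nf (is n) ≠ 0 := by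
      intro n
      have := Finset.prod_ne_zero_iff.1 htr n (Finset.mem_univ n)
      simpa using this
    have hcyc' : (is (Fin.last m)).2.2 = (is 0).1 := by
      rw [hhead, hlast] at hcyc
      exact hcyc
    intro n
    refine ⟨?_, (hNf _).1 (hall n)⟩
    by_cases hn : n = Fin.last m
    · subst hn
      rw [Fin.last_add_one]
      exact hcyc'
    · exact (hchain.1 hch) n hn
  · intro hC
    have hch : (List.ofFn w).IsChain chR := hchain.2 (fun n _ => (hC n).1)
    rw [if_pos hch, hhead, hlast]
    have hcyc : (w (Fin.last m)).2.1 = (w 0).1 := by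
      have := (hC (Fin.last m)).1
      rw [Fin.last_add_one] at this
      exact this
    rw [hcyc, Matrix.trace_single_eq_same, hprodc]
    rw [Finset.prod_ne_zero_iff]
    intro n _
    simpa using (hNf (is n)).2 (hC n).2

/-- Counting the nonzero diagonal entries via the transfer matrix. -/
theorem card_good (m : ℕ) :
    Fintype.card {is : Fin (m + 1) → Fin 2 × Fin 2 × Fin 2 //
        ∀ n : Fin (m + 1), (is n).2.2 = (is (n + 1)).1 ∧ ¬ twoZeros (is n)} =
      ∑ g : Fin (m + 1) → Fin 2, ∏ n : Fin (m + 1), T (g n) (g (n + 1)) := by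
  classical
  have E : {is : Fin (m + 1) → Fin 2 × Fin 2 × Fin 2 //
        ∀ n : Fin (m + 1), (is n).2.2 = (is (n + 1)).1 ∧ ¬ twoZeros (is n)} ≃
      Σ g : Fin (m + 1) → Fin 2,
        {j : Fin (m + 1) → Fin 2 // ∀ n, ¬ twoZeros (g n, j n, g (n + 1))} := by
    refine ⟨fun p => ⟨fun n => (p.1 n).1, fun n => (p.1 n).2.1, fun n => ?_⟩,
      fun q => ⟨fun n => (q.1 n, q.2.1 n, q.1 (n + 1)), fun n => ⟨rfl, q.2.2 n⟩⟩, ?_, ?_⟩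
    · have h1 := (p.2 n).1
      have h2 := (p.2 n).2
      have : ((p.1 n).1, (p.1 n).2.1, (p.1 (n + 1)).1) = p.1 n := by
        rw [← h1]
      rw [this]
      exact h2
    · rintro ⟨is, his⟩
      ext n
      · rfl
      · rfl
      · exact congrArg Fin.val ((his n).1).symm
    · rintro ⟨g, j, hj⟩
      rfl
  rw [Fintype.card_congr E, Fintype.card_sigma]
  refine Finset.sum_congr rfl fun g _ => ?_
  rw [Fintype.card_congr
    (Equiv.subtypePiEquivPi (p := fun n (x : Fin 2) => ¬ twoZeros (g n, x, g (n + 1)))),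
    Fintype.card_pi]
  exact Finset.prod_congr rfl fun n _ => card_j _ _


end FibAux

/-- **Rank of the boundary MPDO of the Fibonacci string-net model:**
`rank ρ^(N) = τ₊^{2N} + τ₋^{2N}`, where `τ± = (1 ± √5)/2`. -/
theorem fibonacci_boundary_rank
    (Nf : Fin 2 × Fin 2 × Fin 2 → ℝ)
    (h0 : ∀ v, twoZeros v → Nf v = 0)
    (hpos : ∀ v, ¬ twoZeros v → 0 < Nf v)
    (N : ℕ) (hN : 1 ≤ N) :
    ((fibRho Nf N).rank : ℝ) =
      ((1 + Real.sqrt 5) / 2) ^ (2 * N) + ((1 - Real.sqrt 5) / 2) ^ (2 * N) := by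
  classical
  obtain ⟨m, rfl⟩ : ∃ m, N = m + 1 := ⟨N - 1, (Nat.succ_pred_eq_of_pos hN).symm⟩
  rw [fibRho, Matrix.rank_diagonal]
  rw [Fintype.card_congr (Equiv.subtypeEquivRight
    (fun is => FibAux.trace_ne_iff Nf h0 hpos m is))]
  rw [FibAux.card_good m]
  push_cast
  have hsum : (∑ g : Fin (m + 1) → Fin 2, ∏ n : Fin (m + 1),
      ((FibAux.T (g n) (g (n + 1)) : ℝ))) = Matrix.trace (FibAux.Mfib ^ (m + 1)) := by
    rw [FibAux.traceCycle]
    exact Finset.sum_congr rfl fun g _ =>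
      Finset.prod_congr rfl fun n _ => FibAux.T_cast _ _
  rw [hsum, FibAux.trace_fib_pow, pow_mul, pow_mul]
end
end

section
/- Let E be an n×n complex matrix such that sup_{m ≥ 1} ‖E^m‖ < ∞ (E is power bounded) and such that for every integer k ≥ 1 the matrix E^k is similar to E, i.e., there exists an invertible matrix S_k with E^k = S_k E S_k^{-1}. Then E² = E. -/
open Polynomial Matrix

section Helpers

lemma PBSI.evalCharpoly {n : ℕ} (E : Matrix (Fin n) (Fin n) ℂ) (x : ℂ) :
    (Matrix.charpoly E).eval x = Matrix.det (x • (1 : Matrix (Fin n) (Fin n) ℂ) - E) := by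
  rw [Matrix.charpoly, ← coe_evalRingHom, RingHom.map_det]
  congr 1
  ext i j
  by_cases h : i = j <;>
    simp [h, charmatrix_apply_eq, charmatrix_apply_ne, Matrix.one_apply, Matrix.smul_apply,
      Matrix.sub_apply]

lemma PBSI.detSwap {n : ℕ} {A B : Matrix (Fin n) (Fin n) ℂ} (h : (A - B).det = 0) :
    (B - A).det = 0 := by
  rw [← neg_sub, Matrix.det_neg, h, mul_zero]

lemma PBSI.detConj {n : ℕ} (E S S' : Matrix (Fin n) (Fin n) ℂ) (hSS' : S * S' = 1)
    (μ : ℂ) : (μ • 1 - S * E * S').det = (μ • (1:Matrix (Fin n) (Fin n) ℂ) - E).det := by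
  have key : S * (μ • 1 - E) * S' = μ • 1 - S * E * S' := by
    rw [Matrix.mul_sub, Matrix.sub_mul, Matrix.mul_smul, mul_one, Matrix.smul_mul, hSS']
  have hdet : S.det * S'.det = 1 := by
    rw [← Matrix.det_mul, hSS', Matrix.det_one]
  rw [← key, Matrix.det_mul, Matrix.det_mul]
  ring_nf
  rw [mul_comm S.det, mul_assoc, hdet, mul_one]

lemma PBSI.detPow {n : ℕ} (E : Matrix (Fin n) (Fin n) ℂ) (lam : ℂ) (k : ℕ)
    (h : (lam • (1:Matrix (Fin n) (Fin n) ℂ) - E).det = 0) :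
    ((lam ^ k) • (1:Matrix (Fin n) (Fin n) ℂ) - E ^ k).det = 0 := by
  have hdvd : (X - C lam) ∣ (X ^ k - C (lam ^ k) : ℂ[X]) := by
    apply dvd_iff_isRoot.mpr
    simp [IsRoot]
  obtain ⟨g, hg⟩ := hdvd
  have h2 := congrArg (aeval E) hg
  simp only [map_sub, map_pow, _root_.map_mul, aeval_X, aeval_C,
    Algebra.algebraMap_eq_smul_one, _root_.smul_pow, one_pow] at h2
  apply PBSI.detSwap
  rw [h2, Matrix.det_mul, PBSI.detSwap h, zero_mul]

lemma PBSI.detRoot {n : ℕ} (E : Matrix (Fin n) (Fin n) ℂ) (μ : ℂ) (k : ℕ) (hk : 1 ≤ k)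
    (h : (μ • (1:Matrix (Fin n) (Fin n) ℂ) - E ^ k).det = 0) :
    ∃ r : ℂ, r ^ k = μ ∧ (r • (1:Matrix (Fin n) (Fin n) ℂ) - E).det = 0 := by
  set p : ℂ[X] := X ^ k - C μ with hp
  have hmon : p.Monic := monic_X_pow_sub_C μ (by omega)
  have hprod : p = (p.roots.map fun a => X - C a).prod :=
    (IsAlgClosed.splits p).eq_prod_roots_of_monic hmon
  set l : List ℂ := p.roots.toList with hl
  have hroots : p.roots = (l : Multiset ℂ) := (Multiset.coe_toList _).symm
  have hlist : p = ((l.map fun a => X - C a) : List ℂ[X]).prod := by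
    rw [hprod, hroots, Multiset.map_coe, Multiset.prod_coe]
  have haev := congrArg (aeval E) hlist
  rw [map_list_prod, List.map_map] at haev
  have hdet := congrArg Matrix.det haev
  rw [show Matrix.det ((l.map (⇑(aeval E) ∘ fun a => X - C a)).prod)
      = ((l.map (⇑(aeval E) ∘ fun a => X - C a)).map Matrix.det).prod from
    map_list_prod Matrix.detMonoidHom _, List.map_map] at hdet
  have h0 : ((aeval E) p).det = 0 := by
    have he : (aeval E) p = E ^ k - μ • 1 := by
      simp [hp, map_sub, map_pow, aeval_X, aeval_C, Algebra.algebraMap_eq_smul_one]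
    rw [he]; exact PBSI.detSwap h
  rw [h0] at hdet
  have hmem0 := List.prod_eq_zero_iff.mp hdet.symm
  obtain ⟨r, hrl, hrx⟩ := List.mem_map.mp hmem0
  have hrroot : r ∈ p.roots := by rw [hroots]; exact_mod_cast hrl
  have hevalr : p.eval r = 0 := (mem_roots'.mp hrroot).2
  refine ⟨r, ?_, ?_⟩
  · have h3 : r ^ k - μ = 0 := by simpa [hp] using hevalr
    exact sub_eq_zero.mp h3
  · apply PBSI.detSwap
    have hx : Matrix.det ((aeval E) (X - C r)) = 0 := hrx
    simpa [map_sub, aeval_X, aeval_C, Algebra.algebraMap_eq_smul_one] using hx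

lemma PBSI.kerPow {n : ℕ} (E S S' : Matrix (Fin n) (Fin n) ℂ)
    (hSS' : S * S' = 1) (hS'S : S' * S = 1) (h2 : E ^ 2 = S * E * S') :
    ∀ (m : ℕ) (x : Fin n → ℂ), (E ^ (m+1)).mulVec x = 0 → E.mulVec x = 0 := by
  set e : (Fin n → ℂ) ≃ₗ[ℂ] (Fin n → ℂ) :=
    LinearEquiv.ofLinear S.mulVecLin S'.mulVecLin
      (by rw [← Matrix.mulVecLin_mul, hSS', Matrix.mulVecLin_one])
      (by rw [← Matrix.mulVecLin_mul, hS'S, Matrix.mulVecLin_one]) with he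
  have heapp : ∀ y, e y = S.mulVec y := by
    intro y; rw [he, LinearEquiv.ofLinear_apply, Matrix.mulVecLin_apply]
  set K1 := LinearMap.ker E.mulVecLin with hK1
  set K2 := LinearMap.ker (E ^ 2).mulVecLin with hK2
  have hle : K1 ≤ K2 := by
    intro x hx
    simp only [hK1, hK2, LinearMap.mem_ker, Matrix.mulVecLin_apply] at *
    rw [pow_two, ← Matrix.mulVec_mulVec, hx, Matrix.mulVec_zero]
  have hmap : Submodule.map (e : (Fin n → ℂ) →ₗ[ℂ] (Fin n → ℂ)) K1 = K2 := by
    ext x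
    simp only [Submodule.mem_map, hK1, hK2, LinearMap.mem_ker, Matrix.mulVecLin_apply,
      LinearEquiv.coe_coe]
    have hSinj : ∀ z : Fin n → ℂ, S.mulVec z = 0 → z = 0 := by
      intro z hz
      have h3 := congrArg (S'.mulVec) hz
      rwa [Matrix.mulVec_mulVec z S' S, hS'S, Matrix.one_mulVec, Matrix.mulVec_zero] at h3
    constructor
    · rintro ⟨y, hy, rfl⟩
      rw [heapp, h2, Matrix.mulVec_mulVec y (S * E * S') S]
      have h4 : S * E * S' * S = S * E := by rw [mul_assoc, hS'S, mul_one]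
      rw [h4, ← Matrix.mulVec_mulVec, hy, Matrix.mulVec_zero]
    · intro hx
      refine ⟨S'.mulVec x, ?_, ?_⟩
      · rw [h2] at hx
        have h5 : S.mulVec ((E * S').mulVec x) = 0 := by
          rw [Matrix.mulVec_mulVec x S (E * S'), ← mul_assoc]; exact hx
        have h6 := hSinj _ h5
        rwa [← Matrix.mulVec_mulVec x E S'] at h6
      · rw [heapp, Matrix.mulVec_mulVec, hSS', Matrix.one_mulVec]
  have hfr : Module.finrank ℂ K2 = Module.finrank ℂ K1 := by
    rw [← hmap]; exact LinearEquiv.finrank_map_eq e K1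
  have heq : K1 = K2 := Submodule.eq_of_le_of_finrank_le hle (le_of_eq hfr)
  have hker2 : ∀ x : Fin n → ℂ, (E ^ 2).mulVec x = 0 → E.mulVec x = 0 := by
    intro x hx
    have hx2 : x ∈ K2 := by simpa [hK2, LinearMap.mem_ker, Matrix.mulVecLin_apply] using hx
    rw [← heq] at hx2
    simpa [hK1, LinearMap.mem_ker, Matrix.mulVecLin_apply] using hx2
  intro m
  induction m with
  | zero => intro x hx; simpa using hx
  | succ m ih =>
    intro x hx
    have h1 : (E ^ 2).mulVec ((E ^ m).mulVec x) = 0 := by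
      rw [Matrix.mulVec_mulVec, ← pow_add]
      have h4 : 2 + m = m + 1 + 1 := by omega
      rw [h4]; exact hx
    have h2' := hker2 _ h1
    apply ih
    rw [pow_succ', ← Matrix.mulVec_mulVec]
    exact h2'

end Helpers

/-- A power-bounded complex matrix which is similar to each of its powers is
idempotent: `E² = E`. -/
theorem power_bounded_selfsimilar_implies_idempotent
    {n : ℕ} (E : Matrix (Fin n) (Fin n) ℂ)
    (hbound : ∃ C : ℝ, ∀ m : ℕ, 1 ≤ m → ∀ i j, ‖(E ^ m) i j‖ ≤ C)
    (hsim : ∀ k : ℕ, 1 ≤ k → ∃ S S' : Matrix (Fin n) (Fin n) ℂ,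
      S * S' = 1 ∧ S' * S = 1 ∧ E ^ k = S * E * S') :
    E * E = E := by
  classical
  obtain ⟨C0, hC⟩ := hbound
  set cp := Matrix.charpoly E with hcp0
  have hmonic : cp.Monic := Matrix.charpoly_monic E
  have hcpne : cp ≠ 0 := hmonic.ne_zero
  set T := cp.roots.toFinset with hT0
  have hTmem : ∀ μ : ℂ, (μ • (1:Matrix (Fin n) (Fin n) ℂ) - E).det = 0 → μ ∈ T := by
    intro μ h
    rw [hT0, Multiset.mem_toFinset, mem_roots']
    exact ⟨hcpne, by rw [IsRoot, hcp0, PBSI.evalCharpoly]; exact h⟩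
  have hTdet : ∀ μ ∈ T, (μ • (1:Matrix (Fin n) (Fin n) ℂ) - E).det = 0 := by
    intro μ hμ
    rw [← PBSI.evalCharpoly]
    exact (mem_roots'.mp (Multiset.mem_toFinset.mp hμ)).2
  have hpow : ∀ μ : ℂ, (μ • (1:Matrix (Fin n) (Fin n) ℂ) - E).det = 0 →
      ∀ k, 1 ≤ k → ((μ ^ k) • (1:Matrix (Fin n) (Fin n) ℂ) - E).det = 0 := by
    intro μ h k hk
    obtain ⟨S, S', hSS', hS'S, hEk⟩ := hsim k hk
    have h1 := PBSI.detPow E μ k h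
    rw [hEk] at h1
    rw [← PBSI.detConj E S S' hSS' (μ ^ k)]
    exact h1
  have hrou : ∀ μ ∈ T, μ = 0 ∨ ∃ d, 1 ≤ d ∧ μ ^ d = 1 := by
    intro μ hμ
    have hdet := hTdet μ hμ
    have hf : ∀ m : ℕ, μ ^ (m+1) ∈ T := fun m => hTmem _ (hpow μ hdet (m+1) (by omega))
    obtain ⟨m1, m2, hne, heqq⟩ :=
      Finite.exists_ne_map_eq_of_infinite (fun m : ℕ => (⟨μ ^ (m+1), hf m⟩ : T))
    have heq' : μ ^ (m1+1) = μ ^ (m2+1) := by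
      simpa using congrArg Subtype.val heqq
    obtain ⟨p, q, hpq, he2⟩ : ∃ p q, p < q ∧ μ ^ (p+1) = μ ^ (q+1) := by
      rcases lt_or_gt_of_ne hne with h | h
      exacts [⟨m1, m2, h, heq'⟩, ⟨m2, m1, h, heq'.symm⟩]
    by_cases hμ0 : μ = 0
    · exact Or.inl hμ0
    right
    refine ⟨q - p, by omega, ?_⟩
    have h3 : μ ^ (p+1) * μ ^ (q-p) = μ ^ (p+1) * 1 := by
      rw [mul_one, ← pow_add, show p+1+(q-p) = q+1 from by omega]
      exact he2.symm
    exact mul_left_cancel₀ (pow_ne_zero _ hμ0) h3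
  set d : ℂ → ℕ := fun μ => if h : ∃ k, 1 ≤ k ∧ μ ^ k = 1 then h.choose else 1 with hd0
  have hd1 : ∀ μ, 1 ≤ d μ := by
    intro μ
    rw [hd0]
    by_cases h : ∃ k, 1 ≤ k ∧ μ ^ k = 1
    · simp only [dif_pos h]; exact h.choose_spec.1
    · simp only [dif_neg h]; exact le_refl 1
  have hdpow : ∀ μ, (∃ k, 1 ≤ k ∧ μ ^ k = 1) → μ ^ (d μ) = 1 := by
    intro μ h
    rw [hd0]
    simp only [dif_pos h]
    exact h.choose_spec.2
  set K := ∏ μ ∈ T, d μ with hK0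
  have hK1 : 1 ≤ K := Finset.one_le_prod' fun μ _ => hd1 μ
  have hTK : ∀ μ ∈ T, μ ^ K = 0 ∨ μ ^ K = 1 := by
    intro μ hμ
    rcases hrou μ hμ with h0 | hru
    · left; rw [h0]; exact zero_pow (by omega)
    · right
      obtain ⟨c, hc⟩ := Finset.dvd_prod_of_mem d hμ
      rw [hK0, hc, pow_mul, hdpow μ hru, one_pow]
  have hspec : ∀ lam : ℂ, cp.IsRoot lam → lam = 0 ∨ lam = 1 := by
    intro lam hroot
    have h1 : (lam • (1:Matrix (Fin n) (Fin n) ℂ) - E).det = 0 := by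
      rw [← PBSI.evalCharpoly]; exact hroot
    obtain ⟨S, S', hSS', hS'S, hEK⟩ := hsim K hK1
    have h2 : (lam • (1:Matrix (Fin n) (Fin n) ℂ) - E ^ K).det = 0 := by
      rw [hEK, PBSI.detConj E S S' hSS']; exact h1
    obtain ⟨r, hrK, hrdet⟩ := PBSI.detRoot E lam K hK1 h2
    rcases hTK r (hTmem r hrdet) with h | h
    · left; rw [← hrK, h]
    · right; rw [← hrK, h]
  -- the characteristic polynomial is X^a * (X-1)^b
  set a := cp.roots.count 0 with ha0
  set b := cp.roots.count 1 with hb0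
  have hroots01 : ∀ r ∈ cp.roots, r = 0 ∨ r = 1 := fun r hr => hspec r (mem_roots'.mp hr).2
  have hrootseq : cp.roots = Multiset.replicate a 0 + Multiset.replicate b 1 := by
    apply Multiset.ext.mpr
    intro x
    rw [Multiset.count_add, Multiset.count_replicate, Multiset.count_replicate]
    by_cases h0 : x = 0
    · subst h0
      rw [if_pos rfl, if_neg (by norm_num : ¬(1 : ℂ) = 0), add_zero]
    · by_cases h1 : x = 1
      · subst h1
        rw [if_neg (by norm_num : ¬(0 : ℂ) = 1), if_pos rfl, zero_add]
      · rw [if_neg (fun h => h0 h.symm), if_neg (fun h => h1 h.symm), add_zero,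
          Multiset.count_eq_zero]
        intro hmem
        rcases hroots01 x hmem with h | h
        exacts [h0 h, h1 h]
  have hsplitcp : cp = (cp.roots.map fun r => X - C r).prod :=
    (IsAlgClosed.splits cp).eq_prod_roots_of_monic hmonic
  have hcpform : cp = X ^ a * (X - 1) ^ b := by
    rw [hsplitcp, hrootseq, Multiset.map_add, Multiset.prod_add, Multiset.map_replicate,
      Multiset.map_replicate, Multiset.prod_replicate, Multiset.prod_replicate]
    norm_num
  have hCH : (aeval E) ((X : ℂ[X]) ^ a * (X - 1) ^ b) = 0 := by
    rw [← hcpform, hcp0]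
    exact Matrix.aeval_self_charpoly E
  have hcop : IsCoprime ((X : ℂ[X]) ^ a) ((X - 1) ^ b) :=
    IsCoprime.pow (⟨1, -1, by ring⟩ : IsCoprime (X : ℂ[X]) (X - 1))
  obtain ⟨u, v, hbez⟩ := hcop
  set Q : Matrix (Fin n) (Fin n) ℂ := (aeval E) (u * X ^ a) with hQ0
  set N : Matrix (Fin n) (Fin n) ℂ := (aeval E) ((X - 1) * (u * X ^ a)) with hN0
  have hQQ : Q * Q = Q := by
    have h1 : (u * X ^ a) * (u * X ^ a) = u * X ^ a + (-(u*v)) * ((X : ℂ[X]) ^ a * (X-1) ^ b) := by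
      linear_combination (u * X ^ a) * hbez
    rw [hQ0, ← _root_.map_mul (aeval E) (u * X ^ a) (u * X ^ a), h1, map_add,
      _root_.map_mul (aeval E) (-(u*v)) ((X : ℂ[X]) ^ a * (X-1) ^ b), hCH, mul_zero, add_zero]
  have hEQ : E * Q = Q + N := by
    have h1 : (X : ℂ[X]) * (u * X ^ a) = u * X ^ a + (X - 1) * (u * X ^ a) := by ring
    have h2 := congrArg (aeval E) h1
    rw [_root_.map_mul (aeval E) X (u * X ^ a), aeval_X, map_add] at h2
    rw [hQ0, hN0]; exact h2
  have hNb : N ^ (b+1) = 0 := by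
    have h1 : ((X - 1) * (u * X ^ a)) ^ (b+1)
        = ((X : ℂ[X]) ^ a * (X-1) ^ b) * ((X - 1) * u ^ (b+1) * X ^ (a*b)) := by
      have ha1 : ((X - 1) * (u * X ^ a)) ^ (b+1)
          = ((X - 1) : ℂ[X]) ^ (b+1) * u ^ (b+1) * (X ^ a) ^ (b+1) := by
        rw [mul_pow, mul_pow]; ring
      have ha2 : ((X : ℂ[X]) ^ a) ^ (b+1) = X ^ a * X ^ (a*b) := by
        rw [← pow_mul, ← pow_add]; congr 1; ring
      rw [ha1, ha2, pow_succ]; ring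
    have h2 := congrArg (aeval E) h1
    rw [map_pow, _root_.map_mul (aeval E) ((X : ℂ[X]) ^ a * (X-1) ^ b)
      ((X - 1) * u ^ (b+1) * X ^ (a*b)), hCH, zero_mul] at h2
    rw [hN0]; exact h2
  have hQN1 : Q * N = N := by
    have h1 : (u * X ^ a) * ((X - 1) * (u * X ^ a))
        = (X - 1) * (u * X ^ a) + (-(u*v*(X-1))) * ((X : ℂ[X]) ^ a * (X-1) ^ b) := by
      linear_combination ((X - 1) * (u * X ^ a)) * hbez
    have h2 := congrArg (aeval E) h1
    rw [_root_.map_mul (aeval E) (u * X ^ a) ((X - 1) * (u * X ^ a)), map_add,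
      _root_.map_mul (aeval E) (-(u*v*(X-1))) ((X : ℂ[X]) ^ a * (X-1) ^ b),
      hCH, mul_zero, add_zero] at h2
    rw [hQ0, hN0]; exact h2
  have hQN : ∀ k, 1 ≤ k → Q * N ^ k = N ^ k := by
    intro k hk
    induction k, hk using Nat.le_induction with
    | base => rw [pow_one]; exact hQN1
    | succ k hk ih => rw [pow_succ, ← mul_assoc, ih]
  -- N = 0 by the power-boundedness growth argument
  have hNzero : N = 0 := by
    by_contra hN
    have hexist : ∃ t : ℕ, N ^ (t+1) = 0 := ⟨b, hNb⟩
    set t := Nat.find hexist with ht0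
    have htsp : N ^ (t+1) = 0 := Nat.find_spec hexist
    have ht1 : 1 ≤ t := by
      by_contra h
      have ht00 : t = 0 := by omega
      rw [ht00, pow_one] at htsp
      exact hN htsp
    have hNt : N ^ t ≠ 0 := by
      have h := Nat.find_min hexist (show t - 1 < t from by omega)
      rwa [show t - 1 + 1 = t from by omega] at h
    set B := Q * N ^ (t - 1) with hB0
    have hQNt : Q * N ^ t = N ^ t := hQN t ht1
    have hEB : E * B = B + N ^ t := by
      calc E * B = E * (Q * N ^ (t-1)) := by rw [hB0]
        _ = (E * Q) * N ^ (t-1) := by rw [mul_assoc]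
        _ = (Q + N) * N ^ (t-1) := by rw [hEQ]
        _ = Q * N ^ (t-1) + N * N ^ (t-1) := by rw [add_mul]
        _ = B + N ^ t := by
            rw [← pow_succ', show t-1+1 = t from by omega, hB0]
    have hENt : E * N ^ t = N ^ t := by
      calc E * N ^ t = E * (Q * N ^ t) := by rw [hQNt]
        _ = (E * Q) * N ^ t := by rw [mul_assoc]
        _ = (Q + N) * N ^ t := by rw [hEQ]
        _ = Q * N ^ t + N * N ^ t := by rw [add_mul]
        _ = N ^ t + N ^ (t+1) := by rw [hQNt, ← pow_succ']
        _ = N ^ t := by rw [htsp, add_zero]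
    have hEmN : ∀ m : ℕ, E ^ m * N ^ t = N ^ t := by
      intro m
      induction m with
      | zero => rw [pow_zero, one_mul]
      | succ m ih => rw [pow_succ, mul_assoc, hENt, ih]
    have hEmB : ∀ m : ℕ, E ^ m * B = B + (m : ℂ) • N ^ t := by
      intro m
      induction m with
      | zero => simp
      | succ m ih =>
        rw [pow_succ', mul_assoc, ih, mul_add, hEB, mul_smul_comm, hENt]
        push_cast
        rw [add_smul, one_smul]
        abel
    have hNtentry : ∃ p q0, (N ^ t) p q0 ≠ 0 := by
      by_contra h
      push_neg at h
      exact hNt (by ext p q0; simpa using h p q0)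
    obtain ⟨p, q0, hpq⟩ := hNtentry
    set D := ∑ r, ‖B r q0‖ with hD0
    have hbound2 : ∀ m : ℕ, 1 ≤ m →
        ‖B p q0 + (m : ℂ) * (N ^ t) p q0‖ ≤ C0 * D := by
      intro m hm
      have hentry : (E ^ m * B) p q0 = B p q0 + (m : ℂ) * (N ^ t) p q0 := by
        rw [hEmB m]
        simp [Matrix.add_apply, Matrix.smul_apply, smul_eq_mul]
      rw [← hentry, Matrix.mul_apply]
      calc ‖∑ r, (E ^ m) p r * B r q0‖
          ≤ ∑ r, ‖(E ^ m) p r * B r q0‖ := norm_sum_le _ _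
        _ ≤ ∑ r, C0 * ‖B r q0‖ := by
            apply Finset.sum_le_sum
            intro r _
            rw [norm_mul]
            exact mul_le_mul_of_nonneg_right (hC m hm p r) (norm_nonneg _)
        _ = C0 * D := by rw [hD0, Finset.mul_sum]
    have habs : ∀ m : ℕ, 1 ≤ m →
        (m : ℝ) * ‖(N ^ t) p q0‖ ≤ C0 * D + ‖B p q0‖ := by
      intro m hm
      have h8 : ‖(m : ℂ) * (N ^ t) p q0‖
          ≤ ‖B p q0 + (m : ℂ) * (N ^ t) p q0‖ + ‖B p q0‖ := by
        calc ‖(m : ℂ) * (N ^ t) p q0‖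
            = ‖(B p q0 + (m : ℂ) * (N ^ t) p q0) - B p q0‖ := by congr 1; ring
          _ ≤ _ := norm_sub_le _ _
      rw [norm_mul, Complex.norm_natCast] at h8
      have h10 := hbound2 m hm
      linarith
    obtain ⟨m, hm⟩ := exists_nat_gt ((C0 * D + ‖B p q0‖) /
      ‖(N ^ t) p q0‖)
    have hpos : 0 < ‖(N ^ t) p q0‖ := norm_pos_iff.mpr hpq
    have h9 := habs (m+1) (by omega)
    have h10 : (C0 * D + ‖B p q0‖) / ‖(N ^ t) p q0‖
        < ((m+1 : ℕ) : ℝ) := by push_cast; linarith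
    rw [div_lt_iff₀ hpos] at h10
    linarith
  have hEQ' : E * Q = Q := by rw [hEQ, hNzero, add_zero]
  have h1Q : (1 : Matrix (Fin n) (Fin n) ℂ) - Q = (aeval E) (v * (X - 1) ^ b) := by
    have h2 := congrArg (aeval E) hbez
    rw [map_add, _root_.map_one] at h2
    rw [hQ0, sub_eq_iff_eq_add']
    exact h2.symm
  have hEa1Q : E ^ a * ((1 : Matrix (Fin n) (Fin n) ℂ) - Q) = 0 := by
    rw [h1Q]
    have h1 : (X : ℂ[X]) ^ a * (v * (X - 1) ^ b) = v * ((X : ℂ[X]) ^ a * (X - 1) ^ b) := by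
      ring
    have h2 := congrArg (aeval E) h1
    rw [_root_.map_mul (aeval E) ((X : ℂ[X]) ^ a) (v * (X - 1) ^ b), map_pow, aeval_X,
      _root_.map_mul (aeval E) v ((X : ℂ[X]) ^ a * (X - 1) ^ b), hCH, mul_zero] at h2
    exact h2
  have hE1Q : E * ((1 : Matrix (Fin n) (Fin n) ℂ) - Q) = 0 := by
    rcases Nat.eq_zero_or_pos a with ha | ha
    · rw [ha, pow_zero, one_mul] at hEa1Q
      rw [hEa1Q, mul_zero]
    · obtain ⟨S, S', hSS', hS'S, h2⟩ := hsim 2 (by omega)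
      have hker := PBSI.kerPow E S S' hSS' hS'S h2
      have hcol : ∀ x : Fin n → ℂ, (E * (1 - Q)).mulVec x = 0 := by
        intro x
        have h5 : (E ^ a).mulVec ((1 - Q).mulVec x) = 0 := by
          rw [Matrix.mulVec_mulVec, hEa1Q, Matrix.zero_mulVec]
        have h6 := hker (a-1) _ (by rw [show a-1+1 = a from by omega]; exact h5)
        rw [← Matrix.mulVec_mulVec]
        exact h6
      ext i j
      have h7 := hcol (Pi.single j 1)
      rw [Matrix.mulVec_single] at h7
      have h8 := congrFun h7 i
      simpa using h8
  have hEeq : E = Q := by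
    calc E = E * 1 := (mul_one E).symm
      _ = E * ((1 - Q) + Q) := by rw [sub_add_cancel]
      _ = E * (1 - Q) + E * Q := by rw [mul_add]
      _ = 0 + Q := by rw [hE1Q, hEQ']
      _ = Q := zero_add Q
  rw [hEeq, hQQ]
end
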